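/- arXiv:2003.05764 — 5 statements merged into one kernel-verified Lean document; each statement's English description precedes it below -/
import Mathlib

section
/- Let 𝔲 = 𝔲₋₁ ⊕ 𝔲₀ ⊕ 𝔲₁ be a ℤ-graded semisimple Lie algebra over a field F of characteristic 0 such that 𝔲₁ is a simple 𝔲₀-module under the bracket action. Then the Lie subalgebra 𝔲' generated by 𝔲₁ and 𝔲₋₁ equals 𝔲₋₁ ⊕ [𝔲₋₁, 𝔲₁] ⊕ 𝔲₁ and is a simple Lie algebra. -/
section Aux

variable {F : Type*} [Field F] {L : Type*} [LieRing L] [LieAlgebra F L]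

/-- Bundle of hypotheses for a short ℤ-grading. -/
structure ShortGrading (Um U0 Up : Submodule F L) : Prop where
  h00 : ∀ x ∈ U0, ∀ y ∈ U0, ⁅x, y⁆ ∈ U0
  h0p : ∀ x ∈ U0, ∀ y ∈ Up, ⁅x, y⁆ ∈ Up
  h0m : ∀ x ∈ U0, ∀ y ∈ Um, ⁅x, y⁆ ∈ Um
  hmp : ∀ x ∈ Um, ∀ y ∈ Up, ⁅x, y⁆ ∈ U0
  hpp : ∀ x ∈ Up, ∀ y ∈ Up, ⁅x, y⁆ = 0
  hmm : ∀ x ∈ Um, ∀ y ∈ Um, ⁅x, y⁆ = 0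
  hsum : Um ⊔ U0 ⊔ Up = ⊤
  hind1 : Um ⊓ (U0 ⊔ Up) = ⊥
  hind2 : U0 ⊓ Up = ⊥

namespace ShortGrading

variable {Um U0 Up : Submodule F L} (hg : ShortGrading Um U0 Up)
include hg

/-- The span of brackets `⁅Um, Up⁆`. -/
def B (_ : ShortGrading Um U0 Up) : Submodule F L :=
  Submodule.span F {z : L | ∃ x ∈ Um, ∃ y ∈ Up, z = ⁅x, y⁆}

lemma hgen {x y : L} (hx : x ∈ Um) (hy : y ∈ Up) : ⁅x, y⁆ ∈ hg.B :=
  Submodule.subset_span ⟨x, hx, y, hy, rfl⟩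

lemma hpm {y x : L} (hy : y ∈ Up) (hx : x ∈ Um) : ⁅y, x⁆ ∈ hg.B := by
  rw [← lie_skew]
  exact hg.B.neg_mem (hg.hgen hx hy)

lemma hB0 : hg.B ≤ U0 := by
  rw [B, Submodule.span_le]
  rintro z ⟨x, hx, y, hy, rfl⟩
  exact hg.hmp x hx y hy

lemma hmB {x t : L} (hx : x ∈ Um) (ht : t ∈ hg.B) : ⁅x, t⁆ ∈ Um := by
  rw [← lie_skew]
  exact Um.neg_mem (hg.h0m t (hg.hB0 ht) x hx)

lemma hpB {y t : L} (hy : y ∈ Up) (ht : t ∈ hg.B) : ⁅y, t⁆ ∈ Up := by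
  rw [← lie_skew]
  exact Up.neg_mem (hg.h0p t (hg.hB0 ht) y hy)

lemma h0B {c t : L} (hc : c ∈ U0) (ht : t ∈ hg.B) : ⁅c, t⁆ ∈ hg.B := by
  induction ht using Submodule.span_induction with
  | mem z hz =>
    obtain ⟨x, hx, y, hy, rfl⟩ := hz
    rw [leibniz_lie]
    exact add_mem (hg.hgen (hg.h0m c hc x hx) hy) (hg.hgen hx (hg.h0p c hc y hy))
  | zero => simpa using (hg.B.zero_mem)
  | add u v hu hv hu' hv' => rw [lie_add]; exact add_mem hu' hv'
  | smul a u hu hu' => rw [lie_smul]; exact hg.B.smul_mem a hu'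

lemma hBB {t s : L} (ht : t ∈ hg.B) (hs : s ∈ hg.B) : ⁅t, s⁆ ∈ hg.B :=
  hg.h0B (hg.hB0 ht) hs

/-- decomposition of an arbitrary element -/
lemma hdec (z : L) : ∃ a ∈ Um, ∃ b ∈ U0, ∃ c ∈ Up, z = a + b + c := by
  have hz : z ∈ Um ⊔ U0 ⊔ Up := by rw [hg.hsum]; exact Submodule.mem_top
  obtain ⟨w, hw, c, hc, rfl⟩ := Submodule.mem_sup.mp hz
  obtain ⟨a, ha, b, hb, rfl⟩ := Submodule.mem_sup.mp hw
  exact ⟨a, ha, b, hb, c, hc, rfl⟩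

/-- uniqueness: directness of the decomposition -/
lemma huniq {a b c : L} (ha : a ∈ Um) (hb : b ∈ U0) (hc : c ∈ Up)
    (h : a + b + c = 0) : a = 0 ∧ b = 0 ∧ c = 0 := by
  have ha' : a = -(b + c) := by linear_combination (norm := abel) h
  have haM : a ∈ Um ⊓ (U0 ⊔ Up) := by
    refine ⟨ha, ?_⟩
    rw [ha']
    exact Submodule.neg_mem _ (Submodule.add_mem_sup hb hc)
  rw [hg.hind1] at haM
  have ha0 : a = 0 := haM
  have hb' : b = -c := by linear_combination (norm := abel) h - ha0
  have hbM : b ∈ U0 ⊓ Up := ⟨hb, by rw [hb']; exact Up.neg_mem hc⟩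
  rw [hg.hind2] at hbM
  have hb0 : b = 0 := hbM
  refine ⟨ha0, hb0, ?_⟩
  linear_combination (norm := abel) h - ha0 - hb0

/-- The submodule `Um ⊔ B ⊔ Up`. -/
def S (hg : ShortGrading Um U0 Up) : Submodule F L := Um ⊔ hg.B ⊔ Up

lemma hUmS : Um ≤ hg.S := le_trans le_sup_left le_sup_left
lemma hBS : hg.B ≤ hg.S := le_trans le_sup_right le_sup_left
lemma hUpS : Up ≤ hg.S := le_sup_right

lemma hSdec {m : L} (hm : m ∈ hg.S) : ∃ a ∈ Um, ∃ t ∈ hg.B, ∃ c ∈ Up, m = a + t + c := by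
  obtain ⟨w, hw, c, hc, rfl⟩ := Submodule.mem_sup.mp hm
  obtain ⟨a, ha, t, ht, rfl⟩ := Submodule.mem_sup.mp hw
  exact ⟨a, ha, t, ht, c, hc, rfl⟩

/-- `S` is stable under brackets with arbitrary elements. -/
lemma hSlie (z : L) {m : L} (hm : m ∈ hg.S) : ⁅z, m⁆ ∈ hg.S := by
  obtain ⟨a, ha, t, ht, c, hc, rfl⟩ := hg.hSdec hm
  obtain ⟨z1, hz1, z2, hz2, z3, hz3, rfl⟩ := hg.hdec z
  have h11 : ⁅z1, a⁆ ∈ hg.S := by rw [hg.hmm z1 hz1 a ha]; exact hg.S.zero_mem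
  have h12 : ⁅z1, t⁆ ∈ hg.S := hg.hUmS (hg.hmB hz1 ht)
  have h13 : ⁅z1, c⁆ ∈ hg.S := hg.hBS (hg.hgen hz1 hc)
  have h21 : ⁅z2, a⁆ ∈ hg.S := hg.hUmS (hg.h0m z2 hz2 a ha)
  have h22 : ⁅z2, t⁆ ∈ hg.S := hg.hBS (hg.h0B hz2 ht)
  have h23 : ⁅z2, c⁆ ∈ hg.S := hg.hUpS (hg.h0p z2 hz2 c hc)
  have h31 : ⁅z3, a⁆ ∈ hg.S := hg.hBS (hg.hpm hz3 ha)
  have h32 : ⁅z3, t⁆ ∈ hg.S := hg.hUpS (hg.hpB hz3 ht)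
  have h33 : ⁅z3, c⁆ ∈ hg.S := by rw [hg.hpp z3 hz3 c hc]; exact hg.S.zero_mem
  simp only [add_lie, lie_add]
  repeat' apply Submodule.add_mem
  all_goals assumption

/-- `S` as a Lie ideal of `L`. -/
def I (hg : ShortGrading Um U0 Up) : LieIdeal F L :=
  { toSubmodule := hg.S
    lie_mem := fun {x m} hm => hg.hSlie x hm }

lemma hIS : (hg.I : Submodule F L) = hg.S := rfl

lemma hImem {x : L} : x ∈ hg.I ↔ x ∈ hg.S := Iff.rfl

/-- complements for the projections -/
lemma hcompl1 : IsCompl Um (U0 ⊔ Up) := by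
  constructor
  · rw [disjoint_iff, hg.hind1]
  · rw [codisjoint_iff, ← sup_assoc, hg.hsum]

lemma hcompl2 : IsCompl Up (Um ⊔ U0) := by
  constructor
  · rw [disjoint_iff]
    rw [eq_bot_iff]
    rintro z ⟨hz1, hz2⟩
    obtain ⟨a, ha, b, hb, rfl⟩ := Submodule.mem_sup.mp hz2
    have hmem : a ∈ Um ⊓ (U0 ⊔ Up) := by
      refine ⟨ha, ?_⟩
      have : a = -b + (a + b) := by abel
      rw [this]
      exact Submodule.add_mem _ (Submodule.mem_sup_left (U0.neg_mem hb))
        (Submodule.mem_sup_right hz1)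
    rw [hg.hind1] at hmem
    have ha0 : a = 0 := hmem
    have hb' : a + b ∈ U0 ⊓ Up := ⟨by simpa [ha0] using hb, hz1⟩
    rw [hg.hind2] at hb'
    simpa using hb'
  · rw [codisjoint_iff, sup_comm, hg.hsum]

/-- The grading derivation `D = proj_Up - proj_Um`. -/
noncomputable def D (hg : ShortGrading Um U0 Up) : L →ₗ[F] L :=
  Up.subtype.comp (Submodule.linearProjOfIsCompl Up (Um ⊔ U0) hg.hcompl2)
    - Um.subtype.comp (Submodule.linearProjOfIsCompl Um (U0 ⊔ Up) hg.hcompl1)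

lemma hDm {a : L} (ha : a ∈ Um) : hg.D a = -a := by
  have h1 : Submodule.linearProjOfIsCompl Um (U0 ⊔ Up) hg.hcompl1 a = ⟨a, ha⟩ :=
    Submodule.linearProjOfIsCompl_apply_left hg.hcompl1 ⟨a, ha⟩
  have h2 : Submodule.linearProjOfIsCompl Up (Um ⊔ U0) hg.hcompl2 a = 0 :=
    Submodule.projectionOnto_apply_of_mem_right hg.hcompl2
      (Submodule.mem_sup_left ha)
  simp [D, h1, h2]

lemma hD0 {b : L} (hb : b ∈ U0) : hg.D b = 0 := by
  have h1 : Submodule.linearProjOfIsCompl Um (U0 ⊔ Up) hg.hcompl1 b = 0 :=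
    Submodule.projectionOnto_apply_of_mem_right hg.hcompl1 (Submodule.mem_sup_left hb)
  have h2 : Submodule.linearProjOfIsCompl Up (Um ⊔ U0) hg.hcompl2 b = 0 :=
    Submodule.projectionOnto_apply_of_mem_right hg.hcompl2 (Submodule.mem_sup_right hb)
  simp [D, h1, h2]

lemma hDp {c : L} (hc : c ∈ Up) : hg.D c = c := by
  have h1 : Submodule.linearProjOfIsCompl Um (U0 ⊔ Up) hg.hcompl1 c = 0 :=
    Submodule.projectionOnto_apply_of_mem_right hg.hcompl1 (Submodule.mem_sup_right hc)
  have h2 : Submodule.linearProjOfIsCompl Up (Um ⊔ U0) hg.hcompl2 c = ⟨c, hc⟩ :=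
    Submodule.linearProjOfIsCompl_apply_left hg.hcompl2 ⟨c, hc⟩
  simp [D, h1, h2]

/-- `D` is a derivation: pure-pure case -/
lemma hDlie_pure {a b : L} (ha : a ∈ Um ∨ a ∈ U0 ∨ a ∈ Up) (hb : b ∈ Um ∨ b ∈ U0 ∨ b ∈ Up) :
    hg.D ⁅a, b⁆ = ⁅hg.D a, b⁆ + ⁅a, hg.D b⁆ := by
  rcases ha with ha | ha | ha <;> rcases hb with hb | hb | hb
  · rw [hg.hmm a ha b hb, hg.hDm ha, hg.hDm hb, map_zero, neg_lie, lie_neg,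
      hg.hmm a ha b hb]
    simp
  · have h : ⁅a, b⁆ ∈ Um := by
      rw [← lie_skew]; exact Um.neg_mem (hg.h0m b hb a ha)
    rw [hg.hDm h, hg.hDm ha, hg.hD0 hb, neg_lie, lie_zero, add_zero]
  · have h : ⁅a, b⁆ ∈ U0 := hg.hmp a ha b hb
    rw [hg.hD0 h, hg.hDm ha, hg.hDp hb, neg_lie]
    abel
  · have h : ⁅a, b⁆ ∈ Um := hg.h0m a ha b hb
    rw [hg.hDm h, hg.hD0 ha, hg.hDm hb, zero_lie, lie_neg, zero_add]
  · have h : ⁅a, b⁆ ∈ U0 := hg.h00 a ha b hb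
    rw [hg.hD0 h, hg.hD0 ha, hg.hD0 hb, zero_lie, lie_zero, add_zero]
  · have h : ⁅a, b⁆ ∈ Up := hg.h0p a ha b hb
    rw [hg.hDp h, hg.hD0 ha, hg.hDp hb, zero_lie, zero_add]
  · have h : ⁅a, b⁆ ∈ U0 := by
      rw [← lie_skew]; exact U0.neg_mem (hg.hmp b hb a ha)
    rw [hg.hD0 h, hg.hDp ha, hg.hDm hb, lie_neg]
    abel
  · have h : ⁅a, b⁆ ∈ Up := by
      rw [← lie_skew]; exact Up.neg_mem (hg.h0p b hb a ha)
    rw [hg.hDp h, hg.hDp ha, hg.hD0 hb, lie_zero, add_zero]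
  · rw [hg.hpp a ha b hb, map_zero, hg.hDp ha, hg.hDp hb, hg.hpp a ha b hb]
    simp

/-- `D` is a derivation -/
lemma hDlie (a b : L) : hg.D ⁅a, b⁆ = ⁅hg.D a, b⁆ + ⁅a, hg.D b⁆ := by
  obtain ⟨a1, ha1, a2, ha2, a3, ha3, rfl⟩ := hg.hdec a
  obtain ⟨b1, hb1, b2, hb2, b3, hb3, rfl⟩ := hg.hdec b
  simp only [add_lie, lie_add, map_add]
  rw [hg.hDlie_pure (Or.inl ha1) (Or.inl hb1),
    hg.hDlie_pure (Or.inl ha1) (Or.inr (Or.inl hb2)),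
    hg.hDlie_pure (Or.inl ha1) (Or.inr (Or.inr hb3)),
    hg.hDlie_pure (Or.inr (Or.inl ha2)) (Or.inl hb1),
    hg.hDlie_pure (Or.inr (Or.inl ha2)) (Or.inr (Or.inl hb2)),
    hg.hDlie_pure (Or.inr (Or.inl ha2)) (Or.inr (Or.inr hb3)),
    hg.hDlie_pure (Or.inr (Or.inr ha3)) (Or.inl hb1),
    hg.hDlie_pure (Or.inr (Or.inr ha3)) (Or.inr (Or.inl hb2)),
    hg.hDlie_pure (Or.inr (Or.inr ha3)) (Or.inr (Or.inr hb3))]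
  abel

end ShortGrading

section Semisimple

variable [CharZero F] [Module.Finite F L] [LieAlgebra.IsSemisimple F L]
variable {Um U0 Up : Submodule F L} (hg : ShortGrading Um U0 Up)
include hg

omit hg in
/-- any abelian ideal is trivial -/
lemma abelian_ideal_eq_bot (Z : LieIdeal F L) (h : ∀ x ∈ Z, ∀ y ∈ Z, ⁅x, y⁆ = 0) :
    Z = ⊥ := by
  have habel : IsLieAbelian ↥Z := by
    constructor
    intro x y
    have hcoe : (↑⁅x, y⁆ : L) = ⁅(x : L), (y : L)⁆ :=
      (Z : LieSubalgebra F L).coe_bracket x y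
    have : (↑⁅x, y⁆ : L) = 0 := by rw [hcoe]; exact h _ x.2 _ y.2
    exact Subtype.ext this
  exact LieAlgebra.HasTrivialRadical.eq_bot_of_isSolvable Z

namespace ShortGrading

/-- elements of `Um` annihilated by `Up` vanish -/
lemma hZm {x : L} (hx : x ∈ Um) (hkill : ∀ y ∈ Up, ⁅x, y⁆ = 0) : x = 0 := by
  let Zs : Submodule F L :=
    { carrier := {z | z ∈ Um ∧ ∀ y ∈ Up, ⁅z, y⁆ = 0}
      add_mem' := by
        rintro a b ⟨ha1, ha2⟩ ⟨hb1, hb2⟩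
        exact ⟨Um.add_mem ha1 hb1, fun y hy => by
          rw [add_lie, ha2 y hy, hb2 y hy, add_zero]⟩
      zero_mem' := ⟨Um.zero_mem, fun y _ => zero_lie y⟩
      smul_mem' := by
        rintro c a ⟨ha1, ha2⟩
        exact ⟨Um.smul_mem c ha1, fun y hy => by rw [smul_lie, ha2 y hy, smul_zero]⟩ }
  have hZsmem : ∀ {z : L}, z ∈ Zs ↔ z ∈ Um ∧ ∀ y ∈ Up, ⁅z, y⁆ = 0 := Iff.rfl
  let Z : LieIdeal F L :=
    { toSubmodule := Zs
      lie_mem := fun {z} {m} hm => by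
        obtain ⟨hm1, hm2⟩ := hZsmem.mp hm
        obtain ⟨z1, hz1, z2, hz2, z3, hz3, rfl⟩ := hg.hdec z
        refine hZsmem.mpr ?_
        have e1 : ⁅z1, m⁆ = 0 := hg.hmm z1 hz1 m hm1
        have e3 : ⁅z3, m⁆ = 0 := by rw [← lie_skew, hm2 z3 hz3, neg_zero]
        constructor
        · simp only [add_lie, e1, e3, zero_add, add_zero]
          exact hg.h0m z2 hz2 m hm1
        · intro y hy
          simp only [add_lie, e1, e3, zero_add, add_zero]
          rw [lie_lie, hm2 y hy, lie_zero, hm2 _ (hg.h0p z2 hz2 y hy), zero_sub, neg_zero]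
    }
  have hbot : Z = ⊥ := by
    apply abelian_ideal_eq_bot
    intro p hp q hq
    exact hg.hmm p (hZsmem.mp hp).1 q (hZsmem.mp hq).1
  have hxZ : x ∈ Z := hZsmem.mpr ⟨hx, hkill⟩
  rw [hbot] at hxZ
  exact (LieSubmodule.mem_bot _).mp hxZ

lemma hZB {t : L} (ht : t ∈ hg.B) (hkp : ∀ y ∈ Up, ⁅t, y⁆ = 0)
    (hkm : ∀ x ∈ Um, ⁅t, x⁆ = 0) : t = 0 := by
  let Zs : Submodule F L :=
    { carrier := {z | z ∈ hg.B ∧ (∀ y ∈ Up, ⁅z, y⁆ = 0) ∧ ∀ x ∈ Um, ⁅z, x⁆ = 0}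
      add_mem' := by
        rintro a b ⟨ha1, ha2, ha3⟩ ⟨hb1, hb2, hb3⟩
        refine ⟨hg.B.add_mem ha1 hb1, fun y hy => ?_, fun x hx => ?_⟩
        · rw [add_lie, ha2 y hy, hb2 y hy, add_zero]
        · rw [add_lie, ha3 x hx, hb3 x hx, add_zero]
      zero_mem' := ⟨hg.B.zero_mem, fun y _ => zero_lie y, fun x _ => zero_lie x⟩
      smul_mem' := by
        rintro c a ⟨ha1, ha2, ha3⟩
        refine ⟨hg.B.smul_mem c ha1, fun y hy => ?_, fun x hx => ?_⟩
        · rw [smul_lie, ha2 y hy, smul_zero]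
        · rw [smul_lie, ha3 x hx, smul_zero] }
  have hZsmem : ∀ {z : L}, z ∈ Zs ↔
      z ∈ hg.B ∧ (∀ y ∈ Up, ⁅z, y⁆ = 0) ∧ ∀ x ∈ Um, ⁅z, x⁆ = 0 := Iff.rfl
  let Z : LieIdeal F L :=
    { toSubmodule := Zs
      lie_mem := fun {z} {m} hm => by
        obtain ⟨hm1, hm2, hm3⟩ := hZsmem.mp hm
        obtain ⟨z1, hz1, z2, hz2, z3, hz3, rfl⟩ := hg.hdec z
        refine hZsmem.mpr ?_
        have e1 : ⁅z1, m⁆ = 0 := by rw [← lie_skew, hm3 z1 hz1, neg_zero]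
        have e3 : ⁅z3, m⁆ = 0 := by rw [← lie_skew, hm2 z3 hz3, neg_zero]
        refine ⟨?_, fun y hy => ?_, fun x hx => ?_⟩
        · simp only [add_lie, e1, e3, zero_add, add_zero]
          exact hg.h0B hz2 hm1
        · simp only [add_lie, e1, e3, zero_add, add_zero]
          rw [lie_lie, hm2 y hy, lie_zero, hm2 _ (hg.h0p z2 hz2 y hy), zero_sub, neg_zero]
        · simp only [add_lie, e1, e3, zero_add, add_zero]
          rw [lie_lie, hm3 x hx, lie_zero, hm3 _ (hg.h0m z2 hz2 x hx), zero_sub, neg_zero]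
    }
  have hbot : Z = ⊥ := by
    apply abelian_ideal_eq_bot
    intro p hp q hq
    obtain ⟨hp1, hp2, hp3⟩ := hZsmem.mp hp
    obtain ⟨hq1, -, -⟩ := hZsmem.mp hq
    -- p kills all of B
    have hkB : ∀ s ∈ hg.B, ⁅p, s⁆ = 0 := by
      intro s hs
      induction hs using Submodule.span_induction with
      | mem w hw =>
        obtain ⟨x, hx, y, hy, rfl⟩ := hw
        rw [leibniz_lie, hp3 x hx, hp2 y hy, zero_lie, lie_zero, add_zero]
      | zero => exact lie_zero p
      | add u v hu hv hu' hv' => rw [lie_add, hu', hv', add_zero]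
      | smul a u hu hu' => rw [lie_smul, hu', smul_zero]
    exact hkB q hq1
  have hxZ : t ∈ Z := hZsmem.mpr ⟨ht, hkp, hkm⟩
  rw [hbot] at hxZ
  exact (LieSubmodule.mem_bot _).mp hxZ

lemma hZp {w : L} (hw : w ∈ Up) (hkill : ∀ x ∈ Um, ⁅x, w⁆ = 0) : w = 0 := by
  let Zs : Submodule F L :=
    { carrier := {z | z ∈ Up ∧ ∀ x ∈ Um, ⁅x, z⁆ = 0}
      add_mem' := by
        rintro a b ⟨ha1, ha2⟩ ⟨hb1, hb2⟩
        exact ⟨Up.add_mem ha1 hb1, fun x hx => by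
          rw [lie_add, ha2 x hx, hb2 x hx, add_zero]⟩
      zero_mem' := ⟨Up.zero_mem, fun x _ => lie_zero x⟩
      smul_mem' := by
        rintro c a ⟨ha1, ha2⟩
        exact ⟨Up.smul_mem c ha1, fun x hx => by rw [lie_smul, ha2 x hx, smul_zero]⟩ }
  have hZsmem : ∀ {z : L}, z ∈ Zs ↔ z ∈ Up ∧ ∀ x ∈ Um, ⁅x, z⁆ = 0 := Iff.rfl
  let Z : LieIdeal F L :=
    { toSubmodule := Zs
      lie_mem := fun {z} {m} hm => by
        obtain ⟨hm1, hm2⟩ := hZsmem.mp hm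
        obtain ⟨z1, hz1, z2, hz2, z3, hz3, rfl⟩ := hg.hdec z
        refine hZsmem.mpr ?_
        have e1 : ⁅z1, m⁆ = 0 := hm2 z1 hz1
        have e3 : ⁅z3, m⁆ = 0 := hg.hpp z3 hz3 m hm1
        constructor
        · simp only [add_lie, e1, e3, zero_add, add_zero]
          exact hg.h0p z2 hz2 m hm1
        · intro x hx
          simp only [add_lie, e1, e3, zero_add, add_zero]
          have hxz2 : ⁅x, z2⁆ ∈ Um := by
            rw [← lie_skew]; exact Um.neg_mem (hg.h0m z2 hz2 x hx)
          rw [leibniz_lie, hm2 _ hxz2, hm2 x hx, lie_zero, add_zero]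
    }
  have hbot : Z = ⊥ := by
    apply abelian_ideal_eq_bot
    intro p hp q hq
    exact hg.hpp p (hZsmem.mp hp).1 q (hZsmem.mp hq).1
  have hxZ : w ∈ Z := hZsmem.mpr ⟨hw, hkill⟩
  rw [hbot] at hxZ
  exact (LieSubmodule.mem_bot _).mp hxZ

/-- `D` preserves atoms -/
lemma hDatom (A : LieIdeal F L) (hA : IsAtom A) {a : L} (ha : a ∈ A) : hg.D a ∈ A := by
  -- the span of brackets of elements of `A`
  let sp : Submodule F L := Submodule.span F {z : L | ∃ x ∈ A, ∃ y ∈ A, z = ⁅x, y⁆}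
  let A2 : LieIdeal F L :=
    { toSubmodule := sp
      lie_mem := fun {z} {m} hm => by
        induction hm using Submodule.span_induction with
        | mem w hw =>
          obtain ⟨x, hx, y, hy, rfl⟩ := hw
          rw [leibniz_lie]
          refine Submodule.add_mem _ (Submodule.subset_span ?_) (Submodule.subset_span ?_)
          · exact ⟨⁅z, x⁆, A.lie_mem hx, y, hy, rfl⟩
          · exact ⟨x, hx, ⁅z, y⁆, A.lie_mem hy, rfl⟩
        | zero => rw [lie_zero]; exact Submodule.zero_mem _
        | add u v hu hv hu' hv' => rw [lie_add]; exact Submodule.add_mem _ hu' hv'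
        | smul c u hu hu' => rw [lie_smul]; exact Submodule.smul_mem _ c hu' }
  have hA2A : A2 ≤ A := by
    intro z hz
    have hz' : z ∈ sp := hz
    clear hz
    induction hz' using Submodule.span_induction with
    | mem w hw =>
      obtain ⟨x, hx, y, hy, rfl⟩ := hw
      exact A.lie_mem hy
    | zero => exact A.zero_mem'
    | add u v hu hv hu' hv' => exact A.add_mem' hu' hv'
    | smul c u hu hu' => exact A.toSubmodule.smul_mem c hu'
  by_cases hA2 : A2 = A
  · -- span induction to show `D a ∈ A`
    have ha2 : a ∈ sp := by rw [show sp = A2.toSubmodule from rfl, hA2]; exact ha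
    clear ha
    induction ha2 using Submodule.span_induction with
    | mem w hw =>
      obtain ⟨x, hx, y, hy, rfl⟩ := hw
      rw [hg.hDlie x y]
      refine A.add_mem' ?_ ?_
      · exact A.lie_mem hy
      · exact lie_mem_left F L A x (hg.D y) hx
    | zero => rw [map_zero]; exact A.zero_mem'
    | add u v hu hv hu' hv' => rw [map_add]; exact A.add_mem' hu' hv'
    | smul c u hu hu' => rw [map_smul]; exact A.toSubmodule.smul_mem c hu'
  · -- otherwise `A2 = ⊥` and `A` is abelian, contradiction
    have hbot : A2 = ⊥ := hA.2 A2 (lt_of_le_of_ne hA2A hA2)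
    exfalso
    apply LieAlgebra.IsSemisimple.non_abelian_of_isAtom A hA
    constructor
    intro x y
    have hxy : (⁅(x : L), (y : L)⁆ : L) ∈ A2 := Submodule.subset_span ⟨x, x.2, y, y.2, rfl⟩
    rw [hbot] at hxy
    have h0 : (⁅(x : L), (y : L)⁆ : L) = 0 := (LieSubmodule.mem_bot _).mp hxy
    have hcoe : (↑⁅x, y⁆ : L) = ⁅(x : L), (y : L)⁆ :=
      (A : LieSubalgebra F L).coe_bracket x y
    exact Subtype.ext (by rw [hcoe, h0]; rfl)

/-- `D` preserves all ideals -/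
lemma hDideal (N : LieIdeal F L) {n : L} (hn : n ∈ N) : hg.D n ∈ N := by
  obtain ⟨T, hT, hNT⟩ := (LieAlgebra.IsSemisimple.booleanGenerators F L).atomistic N
    (by rw [LieAlgebra.IsSemisimple.sSup_atoms_eq_top]; exact le_top)
  have hNT' : N = ⨆ A : T, (A : LieIdeal F L) := by rw [hNT, sSup_eq_iSup']
  have hn' : n ∈ (⨆ A : T, ((A : LieIdeal F L).toSubmodule)) := by
    rw [← LieSubmodule.iSup_toSubmodule]
    exact hNT' ▸ hn
  refine Submodule.iSup_induction (motive := fun z => hg.D z ∈ N) _ hn' (fun A x hx => ?_)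
    (by show hg.D 0 ∈ N; rw [map_zero]; exact N.zero_mem')
    (fun x y hx hy => by show hg.D (x + y) ∈ N; rw [map_add]; exact N.add_mem' hx hy)
  have hDx : hg.D x ∈ (A : LieIdeal F L) := hg.hDatom A (hT A.2) hx
  have hAN : (A : LieIdeal F L) ≤ N := by rw [hNT]; exact le_sSup A.2
  exact hAN hDx

/-- ideals are graded -/
lemma hgraded (N : LieIdeal F L) {n a b c : L} (hn : n ∈ N) (ha : a ∈ Um) (hb : b ∈ U0)
    (hc : c ∈ Up) (heq : n = a + b + c) : a ∈ N ∧ b ∈ N ∧ c ∈ N := by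
  have hDn : hg.D n = -a + c := by
    rw [heq, map_add, map_add, hg.hDm ha, hg.hD0 hb, hg.hDp hc, add_zero]
  have hD2n : hg.D (hg.D n) = a + c := by
    rw [hDn, map_add, map_neg, hg.hDm ha, hg.hDp hc, neg_neg]
  have h1 : hg.D n ∈ N := hg.hDideal N hn
  have h2 : hg.D (hg.D n) ∈ N := hg.hDideal N h1
  have hcc : c = (2⁻¹ : F) • (hg.D (hg.D n) + hg.D n) := by
    rw [hD2n, hDn]
    have : a + c + (-a + c) = (2 : F) • c := by rw [two_smul]; abel
    rw [this, smul_smul, inv_mul_cancel₀ (two_ne_zero), one_smul]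
  have haa : a = (2⁻¹ : F) • (hg.D (hg.D n) - hg.D n) := by
    rw [hD2n, hDn]
    have : a + c - (-a + c) = (2 : F) • a := by rw [two_smul]; abel
    rw [this, smul_smul, inv_mul_cancel₀ (two_ne_zero), one_smul]
  have hcN : c ∈ N := by
    rw [hcc]; exact N.toSubmodule.smul_mem _ (N.toSubmodule.add_mem h2 h1)
  have haN : a ∈ N := by
    rw [haa]; exact N.toSubmodule.smul_mem _ (N.toSubmodule.sub_mem h2 h1)
  refine ⟨haN, ?_, hcN⟩
  have : b = n - a - c := by rw [heq]; abel
  rw [this]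
  exact N.toSubmodule.sub_mem (N.toSubmodule.sub_mem hn haN) hcN

/-- core classification of ideals below `S` -/
lemma hcore (hne : Up ≠ ⊥)
    (hsimple : ∀ W : Submodule F L, W ≤ Up →
      (∀ x ∈ U0, ∀ w ∈ W, ⁅x, w⁆ ∈ W) → W = ⊥ ∨ W = Up)
    (N : LieIdeal F L) (hNS : (N : Submodule F L) ≤ hg.S) :
    (N : Submodule F L) = ⊥ ∨ (N : Submodule F L) = hg.S := by
  have hW1 := hsimple (Up ⊓ (N : Submodule F L)) inf_le_left (fun x hx w hw => by
    have hw' := Submodule.mem_inf.mp hw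
    exact Submodule.mem_inf.mpr ⟨hg.h0p x hx w hw'.1, N.lie_mem hw'.2⟩)
  rcases hW1 with hW1 | hW1
  · -- `Up ⊓ N = ⊥`
    have hW2 := hsimple (Up ⊓ (Nᶜ : LieIdeal F L).toSubmodule) inf_le_left (fun x hx w hw => by
      have hw' := Submodule.mem_inf.mp hw
      exact Submodule.mem_inf.mpr ⟨hg.h0p x hx w hw'.1, (Nᶜ : LieIdeal F L).lie_mem hw'.2⟩)
    rcases hW2 with hW2 | hW2
    · -- both intersections trivial: contradiction
      exfalso
      obtain ⟨w, hw, hw0⟩ := Submodule.exists_mem_ne_zero_of_ne_bot hne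
      have hwT : w ∈ (N ⊔ Nᶜ : LieIdeal F L) := by
        rw [sup_compl_eq_top]; exact LieSubmodule.mem_top w
      obtain ⟨p, hp, q, hq, hpq⟩ := (LieSubmodule.mem_sup _ _ w).mp hwT
      obtain ⟨a, ha, b, hb, c, hc, heqp⟩ := hg.hdec p
      obtain ⟨-, -, hcN⟩ := hg.hgraded N hp ha hb hc heqp
      have heqq : q = -a + -b + (w - c) := by
        linear_combination (norm := abel) -heqp + hpq
      obtain ⟨-, -, hwcN⟩ := hg.hgraded Nᶜ hq (Um.neg_mem ha) (U0.neg_mem hb)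
        (Submodule.sub_mem Up hw hc) heqq
      have h1 : w - c ∈ Up ⊓ (Nᶜ : LieIdeal F L).toSubmodule :=
        Submodule.mem_inf.mpr ⟨Submodule.sub_mem Up hw hc, hwcN⟩
      rw [hW2] at h1
      have hwc : w = c := by
        have := (Submodule.mem_bot F).mp h1
        linear_combination (norm := abel) this
      have h2 : c ∈ Up ⊓ (N : Submodule F L) := Submodule.mem_inf.mpr ⟨hc, hcN⟩
      rw [hW1] at h2
      exact hw0 (by rw [hwc]; exact (Submodule.mem_bot F).mp h2)
    · -- `Up ≤ Nᶜ`, hence `N = ⊥`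
      left
      have hUpNc : Up ≤ (Nᶜ : LieIdeal F L).toSubmodule := by
        rw [← hW2]; exact inf_le_right
      have hkill : ∀ m ∈ N, ∀ y ∈ Up, ⁅m, y⁆ = 0 := by
        intro m hm y hy
        have h1 : ⁅m, y⁆ ∈ N := lie_mem_left F L N m y hm
        have h2 : ⁅m, y⁆ ∈ (Nᶜ : LieIdeal F L) := lie_mem_right F L Nᶜ m y (hUpNc hy)
        have h3 : ⁅m, y⁆ ∈ (N ⊓ Nᶜ : LieIdeal F L) := (LieSubmodule.mem_inf _ _ _).mpr ⟨h1, h2⟩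
        rw [inf_compl_eq_bot] at h3
        exact (LieSubmodule.mem_bot _).mp h3
      rw [Submodule.eq_bot_iff]
      intro n hn
      obtain ⟨a, ha, b, hb, c, hc, heq⟩ := hg.hdec n
      obtain ⟨haN, hbN, hcN⟩ := hg.hgraded N hn ha hb hc heq
      have hcc : c = 0 := by
        have : c ∈ Up ⊓ (N : Submodule F L) := Submodule.mem_inf.mpr ⟨hc, hcN⟩
        rw [hW1] at this
        exact (Submodule.mem_bot F).mp this
      have ha0 : a = 0 := hg.hZm ha (fun y hy => hkill a haN y hy)
      have hbB : b ∈ hg.B := by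
        have hnS : n ∈ hg.S := hNS hn
        obtain ⟨a', ha', t, ht, c', hc', heq'⟩ := hg.hSdec hnS
        have huq := hg.huniq (Submodule.sub_mem Um ha ha')
          (Submodule.sub_mem U0 hb (hg.hB0 ht)) (Submodule.sub_mem Up hc hc')
          (by linear_combination (norm := abel) heq' - heq)
        have hbt : b = t := by
          have := huq.2.1
          linear_combination (norm := abel) this
        rw [hbt]; exact ht
      have hkm : ∀ x ∈ Um, ⁅b, x⁆ = 0 := by
        intro x hx
        have h1 : ⁅b, x⁆ ∈ Um := hg.h0m b hb x hx
        have h2 : ⁅b, x⁆ ∈ N := lie_mem_left F L N b x hbN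
        exact hg.hZm h1 (fun y hy => hkill _ h2 y hy)
      have hb0 : b = 0 := hg.hZB hbB (fun y hy => hkill b hbN y hy) hkm
      rw [heq, ha0, hb0, hcc]
      simp
  · -- `Up ≤ N`, hence `N = S`
    right
    have hUpN : Up ≤ (N : Submodule F L) := by rw [← hW1]; exact inf_le_right
    have hBN : hg.B ≤ (N : Submodule F L) := by
      rw [ShortGrading.B, Submodule.span_le]
      rintro z ⟨x, hx, y, hy, rfl⟩
      exact lie_mem_right F L N x y (hUpN hy)
    let A2 : LieIdeal F L :=
      { toSubmodule := Um ⊔ (N : Submodule F L)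
        lie_mem := fun {z} {m} hm => by
          obtain ⟨u, hu, n, hn, rfl⟩ := Submodule.mem_sup.mp hm
          rw [lie_add]
          refine Submodule.add_mem _ ?_ (Submodule.mem_sup_right (N.lie_mem hn))
          obtain ⟨z1, hz1, z2, hz2, z3, hz3, rfl⟩ := hg.hdec z
          rw [add_lie, add_lie]
          refine Submodule.add_mem _ (Submodule.add_mem _ ?_ ?_) ?_
          · rw [hg.hmm z1 hz1 u hu]; exact Submodule.zero_mem _
          · exact Submodule.mem_sup_left (hg.h0m z2 hz2 u hu)
          · exact Submodule.mem_sup_right (hBN (hg.hpm hz3 hu)) }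
    have hA2br : ∀ p ∈ A2, ∀ q ∈ A2, ⁅p, q⁆ ∈ N := by
      intro p hp q hq
      obtain ⟨u, hu, n, hn, rfl⟩ := Submodule.mem_sup.mp hp
      obtain ⟨u', hu', n', hn', rfl⟩ := Submodule.mem_sup.mp hq
      rw [lie_add, add_lie, add_lie]
      refine N.toSubmodule.add_mem (N.toSubmodule.add_mem ?_ ?_)
        (N.toSubmodule.add_mem ?_ ?_)
      · rw [hg.hmm u hu u' hu']; exact N.toSubmodule.zero_mem
      · exact lie_mem_left F L N n u' hn
      · exact lie_mem_right F L N u n' hn'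
      · exact lie_mem_right F L N n n' hn'
    have h1 : A2 ⊓ Nᶜ = ⊥ := by
      apply abelian_ideal_eq_bot
      intro p hp q hq
      have hp' := (LieSubmodule.mem_inf _ _ _).mp hp
      have hq' := (LieSubmodule.mem_inf _ _ _).mp hq
      have hN : ⁅p, q⁆ ∈ N := hA2br p hp'.1 q hq'.1
      have hNc : ⁅p, q⁆ ∈ (Nᶜ : LieIdeal F L) := lie_mem_left F L Nᶜ p q hp'.2
      have h3 : ⁅p, q⁆ ∈ (N ⊓ Nᶜ : LieIdeal F L) := (LieSubmodule.mem_inf _ _ _).mpr ⟨hN, hNc⟩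
      rw [inf_compl_eq_bot] at h3
      exact (LieSubmodule.mem_bot _).mp h3
    have h2 : A2 ≤ N := by
      have hcalc : A2 = A2 ⊓ N := by
        conv_lhs => rw [← inf_top_eq A2, ← sup_compl_eq_top (x := N)]
        rw [inf_sup_left, h1, sup_bot_eq]
      rw [hcalc]; exact inf_le_right
    have hUmN : Um ≤ (N : Submodule F L) := by
      intro u hu
      exact h2 (Submodule.mem_sup_left hu)
    exact le_antisymm hNS (sup_le (sup_le hUmN hBN) hUpN)

end ShortGrading

end Semisimple

end Aux

/-- If `u = u₋₁ ⊕ u₀ ⊕ u₁` is a short ℤ-graded semisimple Lie algebra over a field of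
characteristic 0 such that `u₁` is a simple `u₀`-module, then the Lie subalgebra generated by
`u₁` and `u₋₁` equals `u₋₁ ⊕ [u₋₁, u₁] ⊕ u₁` and is a simple Lie algebra. -/
theorem stmt0 (F : Type*) [Field F] [CharZero F]
    (L : Type*) [LieRing L] [LieAlgebra F L] [Module.Finite F L]
    [LieAlgebra.IsSemisimple F L]
    (Um U0 Up : Submodule F L)
    -- grading relations
    (h00 : ∀ x ∈ U0, ∀ y ∈ U0, ⁅x, y⁆ ∈ U0)
    (h0p : ∀ x ∈ U0, ∀ y ∈ Up, ⁅x, y⁆ ∈ Up)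
    (h0m : ∀ x ∈ U0, ∀ y ∈ Um, ⁅x, y⁆ ∈ Um)
    (hmp : ∀ x ∈ Um, ∀ y ∈ Up, ⁅x, y⁆ ∈ U0)
    (hpp : ∀ x ∈ Up, ∀ y ∈ Up, ⁅x, y⁆ = 0)
    (hmm : ∀ x ∈ Um, ∀ y ∈ Um, ⁅x, y⁆ = 0)
    -- direct sum decomposition
    (hsum : Um ⊔ U0 ⊔ Up = ⊤)
    (hind1 : Um ⊓ (U0 ⊔ Up) = ⊥)
    (hind2 : U0 ⊓ Up = ⊥)
    -- `u₁` is a simple `u₀`-module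
    (hne : Up ≠ ⊥)
    (hsimple : ∀ W : Submodule F L, W ≤ Up →
      (∀ x ∈ U0, ∀ w ∈ W, ⁅x, w⁆ ∈ W) → W = ⊥ ∨ W = Up) :
    (LieSubalgebra.lieSpan F L ((Um : Set L) ∪ (Up : Set L))).toSubmodule
      = Um ⊔ Submodule.span F {z : L | ∃ x ∈ Um, ∃ y ∈ Up, z = ⁅x, y⁆} ⊔ Up ∧
    LieAlgebra.IsSimple F ↥(LieSubalgebra.lieSpan F L ((Um : Set L) ∪ (Up : Set L))) := by
  have hg : ShortGrading Um U0 Up := ⟨h00, h0p, h0m, hmp, hpp, hmm, hsum, hind1, hind2⟩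
  set K := LieSubalgebra.lieSpan F L ((Um : Set L) ∪ (Up : Set L)) with hK
  have hKS : K.toSubmodule = hg.S := by
    apply le_antisymm
    · let KS : LieSubalgebra F L :=
        { toSubmodule := hg.S
          lie_mem' := fun {x y} _ hy => hg.hSlie x hy }
      have hle : K ≤ KS := by
        apply LieSubalgebra.lieSpan_le.mpr
        rintro z (hz | hz)
        · exact hg.hUmS hz
        · exact hg.hUpS hz
      intro x hx
      exact hle hx
    · refine sup_le (sup_le ?_ ?_) ?_
      · intro x hx; exact LieSubalgebra.subset_lieSpan (Or.inl hx)
      · refine Submodule.span_le.mpr ?_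
        rintro z ⟨x, hx, y, hy, rfl⟩
        exact K.lie_mem (LieSubalgebra.subset_lieSpan (Or.inl hx))
          (LieSubalgebra.subset_lieSpan (Or.inr hy))
      · intro y hy; exact LieSubalgebra.subset_lieSpan (Or.inr hy)
  refine ⟨hKS, ?_⟩
  refine { eq_bot_or_eq_top := ?_, non_abelian := ?_ }
  · intro J
    -- the image of `J` in `L` is an ideal of `L`
    let NL : LieIdeal F L :=
      { toSubmodule := J.toSubmodule.map K.incl.toLinearMap
        lie_mem := fun {z} {m} hm => by
          obtain ⟨j, hjJ, rfl⟩ := Submodule.mem_map.mp hm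
          have hjI : (K.incl.toLinearMap j : L) ∈ hg.I := by
            have : (j : L) ∈ K.toSubmodule := j.2
            rw [hKS] at this
            exact this
          have hzT : z ∈ (hg.I ⊔ hg.Iᶜ : LieIdeal F L) := by
            rw [sup_compl_eq_top]; exact LieSubmodule.mem_top z
          obtain ⟨p, hp, q, hq, rfl⟩ := (LieSubmodule.mem_sup _ _ z).mp hzT
          rw [add_lie]
          refine Submodule.add_mem _ ?_ ?_
          · -- bracket with the part in `I`
            have hpK : p ∈ K := by
              have : p ∈ hg.S := hp
              rw [← hKS] at this
              exact this
            refine Submodule.mem_map.mpr ⟨⁅(⟨p, hpK⟩ : K), j⁆, J.lie_mem hjJ, ?_⟩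
            exact K.coe_bracket (⟨p, hpK⟩ : K) j
          · -- bracket with the part in the complement is zero
            have h1 : ⁅q, (j : L)⁆ ∈ hg.I := lie_mem_right F L hg.I q _ hjI
            have h2 : ⁅q, (j : L)⁆ ∈ (hg.Iᶜ : LieIdeal F L) := lie_mem_left F L hg.Iᶜ q _ hq
            have h3 : ⁅q, (j : L)⁆ ∈ (hg.I ⊓ hg.Iᶜ : LieIdeal F L) :=
              (LieSubmodule.mem_inf _ _ _).mpr ⟨h1, h2⟩
            rw [inf_compl_eq_bot] at h3
            have h4 : ⁅q, (j : L)⁆ = 0 := (LieSubmodule.mem_bot _).mp h3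
            rw [show (K.incl.toLinearMap j : L) = (j : L) from rfl, h4]
            exact Submodule.zero_mem _ }
    have hNLS : (NL : Submodule F L) ≤ hg.S := by
      rintro _ ⟨j, _, rfl⟩
      have : (j : L) ∈ K.toSubmodule := j.2
      rw [hKS] at this
      exact this
    rcases hg.hcore hne hsimple NL hNLS with h | h
    · left
      rw [LieSubmodule.eq_bot_iff]
      intro m hm
      have hmem : (m : L) ∈ (NL : Submodule F L) :=
        Submodule.mem_map_of_mem (f := K.incl.toLinearMap) hm
      rw [h] at hmem
      exact Subtype.ext ((Submodule.mem_bot F).mp hmem)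
    · right
      rw [eq_top_iff]
      intro k _
      have hkS : (k : L) ∈ hg.S := by rw [← hKS]; exact k.2
      rw [← h] at hkS
      obtain ⟨j, hj, hjk⟩ := Submodule.mem_map.mp hkS
      have hje : j = k := Subtype.ext hjk
      rwa [← hje]
  · intro habel
    obtain ⟨w, hw, hw0⟩ := Submodule.exists_mem_ne_zero_of_ne_bot hne
    apply hw0
    apply hg.hZp hw
    intro x hx
    have hxK : x ∈ K := LieSubalgebra.subset_lieSpan (Or.inl hx)
    have hwK : w ∈ K := LieSubalgebra.subset_lieSpan (Or.inr hw)
    have htriv : (⁅(⟨x, hxK⟩ : K), (⟨w, hwK⟩ : K)⁆ : K) = 0 := trivial_lie_zero _ _ _ _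
    have := K.coe_bracket (⟨x, hxK⟩ : K) (⟨w, hwK⟩ : K)
    rw [htriv] at this
    simpa using this.symm
end

section
/- Let E be a finite-dimensional sl₂-module over a field of characteristic 0, with weight space decomposition E = ⊕ₚ Eₚ under h. For j ≥ 0, the map eʲ : Eₚ → Eₚ₊₂ⱼ is injective if j ≤ -p, bijective if j = -p, and surjective if j ≥ -p (when p ≤ 0). -/
section Sl2Aux

variable {F E : Type*} [Field F] [CharZero F] [AddCommGroup E] [Module F E]

private lemma sl2_step (e h : Module.End F E) (he : h * e = e * h + (2 : F) • e)
    (x : E) (c : F) (hx : h x = c • x) : h (e x) = (c + 2) • e x := by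
  have h1 : (h * e) x = (e * h + (2 : F) • e) x := by rw [he]
  simpa [Module.End.mul_apply, hx, map_smul, add_smul, smul_smul] using h1

private lemma sl2_step_down (f h : Module.End F E) (hf : h * f = f * h - (2 : F) • f)
    (x : E) (c : F) (hx : h x = c • x) : h (f x) = (c - 2) • f x := by
  have h1 : (h * f) x = (f * h - (2 : F) • f) x := by rw [hf]
  simpa [Module.End.mul_apply, hx, map_smul, sub_smul, smul_smul] using h1

private lemma sl2_pow_e (e h : Module.End F E) (he : h * e = e * h + (2 : F) • e)
    (n : ℕ) (x : E) (c : F) (hx : h x = c • x) :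
    h ((e ^ n) x) = (c + 2 * n) • (e ^ n) x := by
  induction n with
  | zero => simpa using hx
  | succ n ih =>
    have h1 : (e ^ (n + 1)) x = e ((e ^ n) x) := by rw [pow_succ']; rfl
    rw [h1]
    rw [sl2_step e h he ((e ^ n) x) (c + 2 * n) ih]
    congr 1
    push_cast
    ring

private lemma sl2_pow_f (f h : Module.End F E) (hf : h * f = f * h - (2 : F) • f)
    (n : ℕ) (x : E) (c : F) (hx : h x = c • x) :
    h ((f ^ n) x) = (c - 2 * n) • (f ^ n) x := by
  induction n with
  | zero => simpa using hx
  | succ n ih =>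
    have h1 : (f ^ (n + 1)) x = f ((f ^ n) x) := by rw [pow_succ']; rfl
    rw [h1]
    rw [sl2_step_down f h hf ((f ^ n) x) (c - 2 * n) ih]
    congr 1
    push_cast
    ring

private lemma sl2_comm1 (e h f : Module.End F E) (hef : e * f = f * e + h)
    (x : E) (c : F) (hx : h x = c • x) : f (e x) = e (f x) - c • x := by
  have hfe : f * e = e * f - h := eq_sub_iff_add_eq.mpr hef.symm
  have h1 : (f * e) x = (e * f - h) x := by rw [hfe]
  simpa [Module.End.mul_apply, hx] using h1

/-- Key commutation identity on the weight space of weight `c`: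
`f ∘ e^{j+1} = e^{j+1} ∘ f - (j+1)(c+j) • e^j`. -/
private lemma sl2_comm (e h f : Module.End F E)
    (he : h * e = e * h + (2 : F) • e) (hef : e * f = f * e + h) :
    ∀ (j : ℕ) (x : E) (c : F), h x = c • x →
      f ((e ^ (j + 1)) x) = (e ^ (j + 1)) (f x) - (((j : F) + 1) * (c + j)) • (e ^ j) x := by
  intro j
  induction j with
  | zero =>
    intro x c hx
    have := sl2_comm1 e h f hef x c hx
    simpa using this
  | succ j ih =>
    intro x c hx
    have hx1 : h (e x) = (c + 2) • e x := sl2_step e h he x c hx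
    have hsplit : (e ^ (j + 2)) x = (e ^ (j + 1)) (e x) := by rw [pow_succ]; rfl
    rw [hsplit, ih (e x) (c + 2) hx1, sl2_comm1 e h f hef x c hx]
    have h2 : (e ^ (j + 1)) (e (f x)) = (e ^ (j + 2)) (f x) := by rw [pow_succ]; rfl
    have h3 : (e ^ j) (e x) = (e ^ (j + 1)) x := by rw [pow_succ]; rfl
    rw [map_sub, map_smul, h2, h3]
    push_cast
    module

private lemma sl2_ladder (e h f : Module.End F E)
    (hf : h * f = f * h - (2 : F) • f) (hef : e * f = f * e + h)
    (x : E) (q a : ℤ) (hx : h x = (q : F) • x) (hefx : e (f x) = (a : F) • x) :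
    ∀ r : ℕ, e ((f ^ (r + 1)) x) = ((a + r * q - r * (r + 1) : ℤ) : F) • (f ^ r) x := by
  intro r
  induction r with
  | zero => simpa using hefx
  | succ r ih =>
    have hsplit : (f ^ (r + 2)) x = f ((f ^ (r + 1)) x) := by rw [pow_succ']; rfl
    have hmul : e (f ((f ^ (r + 1)) x)) =
        f (e ((f ^ (r + 1)) x)) + h ((f ^ (r + 1)) x) := by
      have h1 : (e * f) ((f ^ (r + 1)) x) = (f * e + h) ((f ^ (r + 1)) x) := by rw [hef]
      simpa [Module.End.mul_apply] using h1
    have hw : h ((f ^ (r + 1)) x) = ((q : F) - 2 * (r + 1 : ℕ)) • (f ^ (r + 1)) x :=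
      sl2_pow_f f h hf (r + 1) x (q : F) hx
    rw [hsplit, hmul, ih, map_smul, hw]
    have h4 : (f ((f ^ r) x)) = (f ^ (r + 1)) x := by rw [pow_succ']; rfl
    rw [h4, ← add_smul]
    congr 1
    push_cast
    ring

private lemma sl2_fin [FiniteDimensional F E] (f h : Module.End F E)
    (hf : h * f = f * h - (2 : F) • f) (x : E) (c : F) (hx : h x = c • x) :
    ∃ n : ℕ, (f ^ n) x = 0 := by
  by_contra hc
  push_neg at hc
  have hinj : Function.Injective (fun n : ℕ => c - 2 * n) := by
    intro m n hmn
    have hmn' : c - 2 * (m : F) = c - 2 * (n : F) := hmn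
    have h2 : (2 : F) * m = 2 * n := by linear_combination -hmn'
    have h3 : (m : F) = n := mul_left_cancel₀ two_ne_zero h2
    exact_mod_cast h3
  have li := Module.End.eigenvectors_linearIndependent' h (fun n : ℕ => c - 2 * n) hinj
    (fun n => (f ^ n) x)
    (fun n => ⟨Module.End.mem_eigenspace_iff.mpr (sl2_pow_f f h hf n x c hx), hc n⟩)
  exact Module.Finite.not_linearIndependent_of_infinite _ li

private lemma sl2_noneg [FiniteDimensional F E] (e h f : Module.End F E)
    (hf : h * f = f * h - (2 : F) • f) (hef : e * f = f * e + h)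
    (x : E) (q a : ℤ) (hq : q ≤ 0) (ha : a < 0)
    (hx : h x = (q : F) • x) (hefx : e (f x) = (a : F) • x) : x = 0 := by
  classical
  by_contra hx0
  obtain ⟨n, hn⟩ := sl2_fin f h hf x (q : F) hx
  have hex : ∃ r : ℕ, (f ^ (r + 1)) x = 0 := by
    cases n with
    | zero => simp at hn; exact absurd hn hx0
    | succ m => exact ⟨m, hn⟩
  set r := Nat.find hex with hr_def
  have hr1 : (f ^ (r + 1)) x = 0 := Nat.find_spec hex
  have hr0 : (f ^ r) x ≠ 0 := by
    rcases Nat.eq_zero_or_pos r with h0 | h0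
    · rw [h0]; simpa using hx0
    · obtain ⟨s, hs⟩ : ∃ s, r = s + 1 := ⟨r - 1, by omega⟩
      rw [hs]
      exact Nat.find_min hex (by omega)
  have hlad := sl2_ladder e h f hf hef x q a hx hefx r
  rw [hr1, map_zero] at hlad
  have hD : ((a + r * q - r * (r + 1) : ℤ) : F) = 0 := by
    rcases smul_eq_zero.mp hlad.symm with h1 | h1
    · exact h1
    · exact absurd h1 hr0
  have hDz : (a + r * q - r * (r + 1) : ℤ) = 0 := by exact_mod_cast hD
  nlinarith [mul_nonneg (Int.ofNat_nonneg r) (by omega : (0 : ℤ) ≤ 1 - q + r)]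

/-- Main injectivity lemma: `f^j ∘ e^j` is injective on the weight space of weight `q`
whenever `j ≤ -q`. -/
private lemma sl2_inj [FiniteDimensional F E] (e h f : Module.End F E)
    (he : h * e = e * h + (2 : F) • e) (hf : h * f = f * h - (2 : F) • f)
    (hef : e * f = f * e + h) :
    ∀ (j : ℕ) (q : ℤ), (j : ℤ) ≤ -q → ∀ x : E, h x = (q : F) • x →
      (f ^ j) ((e ^ j) x) = 0 → x = 0 := by
  intro j
  induction j with
  | zero => intro q _ x _ hz; simpa using hz
  | succ j ih =>
    intro q hjq x hx hz
    push_cast at hjq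
    have h1 : (f ^ (j + 1)) ((e ^ (j + 1)) x) = (f ^ j) (f ((e ^ (j + 1)) x)) := by
      rw [pow_succ]; rfl
    set a : ℤ := (j + 1) * (q + j) with ha_def
    have hca : ((j : F) + 1) * ((q : F) + j) = (a : F) := by
      rw [ha_def]; push_cast; ring
    have hcomm : f ((e ^ (j + 1)) x) = (e ^ (j + 1)) (f x) - (a : F) • (e ^ j) x := by
      rw [sl2_comm e h f he hef j x (q : F) hx, hca]
    have h2 : (e ^ (j + 1)) (f x) = (e ^ j) (e (f x)) := by rw [pow_succ]; rfl
    have hz' : (f ^ j) ((e ^ j) (e (f x) - (a : F) • x)) = 0 := by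
      rw [h1, hcomm, h2] at hz
      simpa [map_sub, map_smul] using hz
    have hy : h (e (f x) - (a : F) • x) = (q : F) • (e (f x) - (a : F) • x) := by
      have hfx : h (f x) = ((q : F) - 2) • f x := sl2_step_down f h hf x _ hx
      have hefx' : h (e (f x)) = ((q : F) - 2 + 2) • e (f x) := sl2_step e h he _ _ hfx
      rw [map_sub, map_smul, hefx', hx]
      module
    have hy0 := ih q (by omega) _ hy hz'
    have hefx : e (f x) = (a : F) • x := by rwa [sub_eq_zero] at hy0
    have ha : a < 0 := by
      have h5 : (0 : ℤ) < (j : ℤ) + 1 := by omega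
      have h6 : q + (j : ℤ) < 0 := by omega
      exact mul_neg_of_pos_of_neg h5 h6
    exact sl2_noneg e h f hf hef x q a (by omega) ha hx hefx

end Sl2Aux

/-- Let `E` be a finite-dimensional `sl₂`-module over a field of characteristic 0, with standard
generators acting as `e, h, f`. For `j ≥ 0` the map `e^j : Eₚ → E_{p+2j}` between weight spaces
is injective if `j ≤ -p`, bijective if `j = -p`, and surjective if `j ≥ -p`. -/
theorem stmt3 (F : Type*) [Field F] [CharZero F]
    (E : Type*) [AddCommGroup E] [Module F E] [FiniteDimensional F E]
    (e h f : Module.End F E)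
    (hhe : ⁅h, e⁆ = (2 : F) • e) (hhf : ⁅h, f⁆ = (-2 : F) • f) (hef : ⁅e, f⁆ = h)
    (p : ℤ) (j : ℕ) :
    -- injective if `j ≤ -p`
    (((j : ℤ) ≤ -p) → ∀ v : E, h v = (p : F) • v → (e ^ j) v = 0 → v = 0) ∧
    -- surjective if `j ≥ -p`
    ((-p ≤ (j : ℤ)) → ∀ w : E, h w = ((p + 2 * j : ℤ) : F) • w →
      ∃ v : E, h v = (p : F) • v ∧ (e ^ j) v = w) ∧
    -- bijective if `j = -p`
    (((j : ℤ) = -p) → ∀ w : E, h w = ((p + 2 * j : ℤ) : F) • w →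
      ∃! v : E, h v = (p : F) • v ∧ (e ^ j) v = w) := by
  rw [Ring.lie_def] at hhe hhf hef
  have he : h * e = e * h + (2 : F) • e := by
    rw [sub_eq_iff_eq_add.mp hhe]; abel
  have hf : h * f = f * h - (2 : F) • f := by
    rw [sub_eq_iff_eq_add.mp hhf, neg_smul]; abel
  have hef' : e * f = f * e + h := by
    rw [sub_eq_iff_eq_add.mp hef]; abel
  -- relations for the flipped triple `(f, -h, e)`
  have he' : (-h) * f = f * (-h) + (2 : F) • f := by
    rw [neg_mul, mul_neg, hf]; abel
  have hf' : (-h) * e = e * (-h) - (2 : F) • e := by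
    rw [neg_mul, mul_neg, he]; abel
  have hef'' : f * e = e * f + (-h) := by rw [hef']; abel
  -- part 1: injectivity
  have inj : ((j : ℤ) ≤ -p) → ∀ v : E, h v = (p : F) • v → (e ^ j) v = 0 → v = 0 := by
    intro hjp v hv hev
    exact sl2_inj e h f he hf hef' j p hjp v hv (by rw [hev, map_zero])
  -- part 2: surjectivity
  have surj : (-p ≤ (j : ℤ)) → ∀ w : E, h w = ((p + 2 * j : ℤ) : F) • w →
      ∃ v : E, h v = (p : F) • v ∧ (e ^ j) v = w := by
    intro hpj w hw
    set q' : ℤ := p + 2 * j with hq'_def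
    have hjq' : (j : ℤ) ≤ q' := by omega
    set W := Module.End.eigenspace h ((q' : ℤ) : F) with hW_def
    set g : Module.End F E := e ^ j * f ^ j with hg_def
    have hmap : ∀ x ∈ W, g x ∈ W := by
      intro x hxW
      rw [Module.End.mem_eigenspace_iff] at hxW ⊢
      have h1 : h ((f ^ j) x) = ((q' : F) - 2 * j) • (f ^ j) x :=
        sl2_pow_f f h hf j x _ hxW
      have h2 : h ((e ^ j) ((f ^ j) x)) = ((q' : F) - 2 * j + 2 * j) • (e ^ j) ((f ^ j) x) :=
        sl2_pow_e e h he j _ _ h1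
      have h3 : g x = (e ^ j) ((f ^ j) x) := rfl
      rw [h3, h2]
      congr 1
      ring
    set L : W →ₗ[F] W := g.restrict hmap with hL_def
    have hinj : Function.Injective L := by
      rw [← LinearMap.ker_eq_bot]
      rw [Submodule.eq_bot_iff]
      intro y hy
      rw [LinearMap.mem_ker] at hy
      have hy0 : g y.1 = 0 := by
        have := congrArg (Subtype.val) hy
        simpa [hL_def, LinearMap.restrict_apply] using this
      have hwt : (-h) y.1 = ((-q' : ℤ) : F) • y.1 := by
        have := Module.End.mem_eigenspace_iff.mp y.2
        rw [LinearMap.neg_apply, this]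
        push_cast
        module
      have hz : (e ^ j) ((f ^ j) y.1) = 0 := by rw [← hy0]; rfl
      have := sl2_inj f (-h) e he' hf' hef'' j (-q') (by omega) y.1 hwt hz
      exact Subtype.ext this
    have hsurj : Function.Surjective L := LinearMap.injective_iff_surjective.mp hinj
    obtain ⟨y, hy⟩ := hsurj ⟨w, Module.End.mem_eigenspace_iff.mpr hw⟩
    refine ⟨(f ^ j) y.1, ?_, ?_⟩
    · have h1 : h ((f ^ j) y.1) = ((q' : F) - 2 * j) • (f ^ j) y.1 :=
        sl2_pow_f f h hf j y.1 _ (Module.End.mem_eigenspace_iff.mp y.2)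
      rw [h1, hq'_def]
      congr 1
      push_cast
      ring
    · have := congrArg (Subtype.val) hy
      simpa [hL_def, LinearMap.restrict_apply, hg_def, Module.End.mul_apply] using this
  refine ⟨inj, surj, ?_⟩
  -- part 3: bijectivity
  intro hpj w hw
  obtain ⟨v, hv1, hv2⟩ := surj (by omega) w hw
  refine ⟨v, ⟨hv1, hv2⟩, ?_⟩
  rintro y ⟨hy1, hy2⟩
  have hsub : h (y - v) = (p : F) • (y - v) := by
    rw [map_sub, hy1, hv1, smul_sub]
  have hz : (e ^ j) (y - v) = 0 := by rw [map_sub, hy2, hv2, sub_self]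
  have := inj (by omega) (y - v) hsub hz
  exact sub_eq_zero.mp this
end

section
/- Let F be a finite extension of ℚ_p with p odd, let u be a non-square unit of F, π a uniformizer, and E = F(√u). Then there exists a matrix g ∈ GL(2, E) such that g·ᵗḡ = π·I₂, where ᵗḡ denotes the transpose of the entrywise Galois conjugate of g. -/
open IsUltrametricDist in
/-- The ring of integers of an ultrametric normed field. -/
def myIntRing (F : Type*) [NormedField F] [IsUltrametricDist F] : Subring F where
  carrier := {x | ‖x‖ ≤ 1}
  one_mem' := by simp
  zero_mem' := by simp
  mul_mem' := fun {a b} ha hb => by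
    simp only [Set.mem_setOf_eq, norm_mul] at *
    exact mul_le_one₀ ha (norm_nonneg _) hb
  add_mem' := fun {a b} ha hb => by
    simp only [Set.mem_setOf_eq] at *
    exact (norm_add_le_max a b).trans (max_le ha hb)
  neg_mem' := fun {a} ha => by simpa using ha

@[simp] lemma mem_myIntRing {F : Type*} [NormedField F] [IsUltrametricDist F] (x : F) :
    x ∈ myIntRing F ↔ ‖x‖ ≤ 1 := Iff.rfl

open IsUltrametricDist in
/-- The maximal ideal of the ring of integers. -/
def myMaxIdeal (F : Type*) [NormedField F] [IsUltrametricDist F] : Ideal (myIntRing F) where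
  carrier := {x | ‖(x : F)‖ < 1}
  zero_mem' := by simp
  add_mem' := fun {a b} ha hb => by
    simp only [Set.mem_setOf_eq] at *
    push_cast
    exact lt_of_le_of_lt (norm_add_le_max (a : F) b) (max_lt ha hb)
  smul_mem' := fun c {x} hx => by
    simp only [Set.mem_setOf_eq] at *
    have hc : ‖(c : F)‖ ≤ 1 := c.2
    calc ‖((c • x) : F)‖ = ‖(c : F)‖ * ‖(x : F)‖ := by
          have hce : ((c • x) : F) = (c : F) * (x : F) := rfl
          rw [hce, norm_mul]
      _ ≤ 1 * ‖(x : F)‖ := mul_le_mul_of_nonneg_right hc (norm_nonneg _)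
      _ < 1 := by simpa using hx

lemma my_norm_sub_le_max {S : Type*} [SeminormedAddCommGroup S] [IsUltrametricDist S]
    (a b : S) : ‖a - b‖ ≤ max ‖a‖ ‖b‖ := by
  rw [sub_eq_add_neg]
  simpa using IsUltrametricDist.norm_add_le_max a (-b)

@[simp] lemma mem_myMaxIdeal {F : Type*} [NormedField F] [IsUltrametricDist F]
    (x : myIntRing F) : x ∈ myMaxIdeal F ↔ ‖(x : F)‖ < 1 := Iff.rfl

open IsUltrametricDist in
/-- Hensel/Newton square root lifting in a complete ultrametric field with `‖2‖ = 1`. -/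
lemma newton_sqrt {F : Type*} [NormedField F] [CompleteSpace F] [IsUltrametricDist F]
    (h2 : ‖(2 : F)‖ = 1) (v x₀ : F) (h0 : ‖x₀‖ = 1) (hv : ‖x₀ ^ 2 - v‖ < 1) :
    ∃ x : F, x ^ 2 = v := by
  have h20 : (2 : F) ≠ 0 := by intro h; rw [h] at h2; simp at h2
  set δ := ‖x₀ ^ 2 - v‖ with hδ
  have hδ0 : 0 ≤ δ := norm_nonneg _
  have hδ1 : δ < 1 := hv
  set f : F → F := fun x => (x + v * x⁻¹) / 2 with hf
  set seq : ℕ → F := fun n => f^[n] x₀ with hseq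
  have hstep : ∀ x : F, x ≠ 0 → f x ^ 2 - v = ((x ^ 2 - v) / (2 * x)) ^ 2 := by
    intro x hx0
    simp only [hf]
    field_simp [hf]
    ring
  have hsub : ∀ x : F, x ≠ 0 → x - f x = (x ^ 2 - v) / (2 * x) := by
    intro x hx0
    simp only [hf]
    field_simp [hf]
    ring
  have hinv : ∀ n, ‖seq n‖ = 1 ∧ ‖seq n ^ 2 - v‖ ≤ δ ^ (n + 1) := by
    intro n
    induction n with
    | zero => exact ⟨h0, by simp [hseq, hδ]⟩
    | succ n ih =>
      obtain ⟨hn1, hn2⟩ := ih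
      have hx0 : seq n ≠ 0 := by intro h; rw [h] at hn1; simp at hn1
      have hsn : seq (n + 1) = f (seq n) := Function.iterate_succ_apply' f n x₀
      have hnd : ‖seq n ^ 2 - v‖ / (‖(2:F)‖ * ‖seq n‖) = ‖seq n ^ 2 - v‖ := by
        rw [h2, hn1]; norm_num
      have hkey : ‖seq (n + 1) ^ 2 - v‖ = ‖seq n ^ 2 - v‖ ^ 2 := by
        rw [hsn, hstep _ hx0, norm_pow, norm_div, norm_mul, hnd]
      have hlt1 : ‖seq n ^ 2 - v‖ < 1 := hn2.trans_lt (pow_lt_one₀ hδ0 hδ1 (by omega))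
      have hdiff : ‖seq n - seq (n + 1)‖ < 1 := by
        rw [hsn, hsub _ hx0, norm_div, norm_mul, hnd]
        exact hlt1
      have hdiff' : ‖seq (n + 1) - seq n‖ < 1 := by rwa [norm_sub_rev]
      constructor
      · have hle : ‖seq (n + 1)‖ ≤ 1 := by
          calc ‖seq (n + 1)‖ = ‖seq (n + 1) - seq n + seq n‖ := by rw [sub_add_cancel]
            _ ≤ max ‖seq (n + 1) - seq n‖ ‖seq n‖ := norm_add_le_max _ _
            _ ≤ 1 := max_le hdiff'.le hn1.le
        rcases lt_or_eq_of_le hle with hlt | heq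
        · exfalso
          have hge : (1 : ℝ) ≤ max ‖seq n - seq (n + 1)‖ ‖seq (n + 1)‖ := by
            calc (1:ℝ) = ‖seq n‖ := hn1.symm
              _ = ‖seq n - seq (n + 1) + seq (n + 1)‖ := by rw [sub_add_cancel]
              _ ≤ _ := norm_add_le_max _ _
          rcases max_cases ‖seq n - seq (n+1)‖ ‖seq (n+1)‖ with ⟨h, _⟩ | ⟨h, _⟩ <;>
            rw [h] at hge <;> linarith
        · exact heq
      · rw [hkey]
        calc ‖seq n ^ 2 - v‖ ^ 2 ≤ (δ ^ (n+1)) ^ 2 := by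
              apply pow_le_pow_left₀ (norm_nonneg _) hn2
          _ = δ ^ (2 * (n + 1)) := by ring
          _ ≤ δ ^ (n + 2) := pow_le_pow_of_le_one hδ0 hδ1.le (by omega)
  have hcau : CauchySeq seq := by
    apply cauchySeq_of_le_geometric δ 1 hδ1
    intro n
    rw [dist_eq_norm]
    obtain ⟨hn1, hn2⟩ := hinv n
    have hx0 : seq n ≠ 0 := by intro h; rw [h] at hn1; simp at hn1
    have hsn : seq (n + 1) = f (seq n) := Function.iterate_succ_apply' f n x₀
    calc ‖seq n - seq (n + 1)‖ = ‖seq n ^ 2 - v‖ / (‖(2:F)‖ * ‖seq n‖) := by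
          rw [hsn, hsub _ hx0, norm_div, norm_mul]
      _ = ‖seq n ^ 2 - v‖ := by rw [h2, hn1]; norm_num
      _ ≤ δ ^ (n + 1) := hn2
      _ = δ ^ n * δ := by ring
      _ ≤ δ ^ n * 1 := mul_le_mul_of_nonneg_left hδ1.le (pow_nonneg hδ0 n)
      _ = 1 * δ ^ n := by ring
  obtain ⟨x, hx⟩ := cauchySeq_tendsto_of_complete hcau
  refine ⟨x, ?_⟩
  have h1 : Filter.Tendsto (fun n => seq n ^ 2) Filter.atTop (nhds (x ^ 2)) := hx.pow 2
  have h2' : Filter.Tendsto (fun n => seq n ^ 2) Filter.atTop (nhds v) := by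
    rw [tendsto_iff_norm_sub_tendsto_zero]
    apply squeeze_zero (fun n => norm_nonneg _) (fun n => (hinv n).2)
    have ht : Filter.Tendsto (fun n : ℕ => δ ^ n * δ) Filter.atTop (nhds (0 * δ)) :=
      (tendsto_pow_atTop_nhds_zero_of_lt_one hδ0 hδ1).mul_const δ
    simpa [pow_succ] using ht
  exact tendsto_nhds_unique h1 h2'

set_option maxHeartbeats 2000000 in
set_option synthInstance.maxHeartbeats 1000000 in
open IsUltrametricDist in
lemma exists_hermitian_norm_rep {F : Type*} [NormedField F] [ProperSpace F]
    [IsUltrametricDist F] (h2 : ‖(2 : F)‖ = 1) (u w : F) (hu : ‖u‖ = 1) (hw : ‖w‖ = 1) :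
    ∃ a b : F, a ^ 2 - u * b ^ 2 = w := by
  classical
  haveI hIprime : (myMaxIdeal F).IsPrime := by
    constructor
    · intro h
      have h1 : (1 : myIntRing F) ∈ myMaxIdeal F := h ▸ Submodule.mem_top
      rw [mem_myMaxIdeal] at h1
      simp at h1
    · intro a b hab
      rw [mem_myMaxIdeal] at hab
      rw [mem_myMaxIdeal, mem_myMaxIdeal]
      by_contra hcon
      push_neg at hcon
      obtain ⟨ha, hb⟩ := hcon
      have ha1 : ‖(a : F)‖ = 1 := le_antisymm a.2 ha
      have hb1 : ‖(b : F)‖ = 1 := le_antisymm b.2 hb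
      have hab1 : ‖((a * b : myIntRing F) : F)‖ = 1 := by
        push_cast; rw [norm_mul, ha1, hb1, one_mul]
      rw [hab1] at hab
      exact lt_irrefl _ hab
  haveI hOcs : CompactSpace (myIntRing F) := by
    have hset : ((myIntRing F) : Set F) = Metric.closedBall 0 1 := by
      ext x
      simp only [Metric.mem_closedBall, dist_zero_right, SetLike.mem_coe, mem_myIntRing]
    exact isCompact_iff_compactSpace.mp (hset ▸ isCompact_closedBall (0 : F) 1)
  haveI hfin : Finite (myIntRing F ⧸ myMaxIdeal F) := by
    set mk := Ideal.Quotient.mk (myMaxIdeal F) with hmk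
    have hopen : ∀ c : myIntRing F ⧸ myMaxIdeal F, IsOpen {x : myIntRing F | mk x = c} := by
      intro c
      rw [Metric.isOpen_iff]
      intro x hx
      refine ⟨1, one_pos, fun y hy => ?_⟩
      rw [Metric.mem_ball, Subtype.dist_eq, dist_eq_norm] at hy
      have hyx : y - x ∈ myMaxIdeal F := by rw [mem_myMaxIdeal]; push_cast; exact hy
      simp only [Set.mem_setOf_eq] at hx ⊢
      rw [← hx]
      exact (Ideal.Quotient.mk_eq_mk_iff_sub_mem y x).mpr hyx
    have hcover : (Set.univ : Set (myIntRing F)) ⊆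
        ⋃ c : myIntRing F ⧸ myMaxIdeal F, {x : myIntRing F | mk x = c} :=
      fun x _ => Set.mem_iUnion.mpr ⟨mk x, rfl⟩
    obtain ⟨t, ht⟩ := isCompact_univ.elim_finite_subcover _ hopen hcover
    have hmem : ∀ c : myIntRing F ⧸ myMaxIdeal F, c ∈ t := by
      intro c
      obtain ⟨x, rfl⟩ := Ideal.Quotient.mk_surjective c
      obtain ⟨c', hc', hx⟩ := Set.mem_iUnion₂.mp (ht (Set.mem_univ x))
      simp only [Set.mem_setOf_eq] at hx
      rwa [hx]
    exact Finite.of_injective (fun c : myIntRing F ⧸ myMaxIdeal F => (⟨c, hmem c⟩ : t))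
      (fun a b hab => by simpa using congrArg Subtype.val hab)
  haveI : Fintype (myIntRing F ⧸ myMaxIdeal F) := Fintype.ofFinite _
  have hu1 : u ∈ myIntRing F := le_of_eq hu
  have hw1 : w ∈ myIntRing F := le_of_eq hw
  set uO : myIntRing F := ⟨u, hu1⟩ with huO
  set wO : myIntRing F := ⟨w, hw1⟩ with hwO
  set mk := Ideal.Quotient.mk (myMaxIdeal F) with hmk
  have hmk_ne : ∀ x : myIntRing F, ‖(x : F)‖ = 1 → mk x ≠ 0 := by
    intro x hx h
    rw [hmk, Ideal.Quotient.eq_zero_iff_mem, mem_myMaxIdeal, hx] at h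
    exact lt_irrefl _ h
  have hcard : Fintype.card (myIntRing F ⧸ myMaxIdeal F) % 2 = 1 := by
    by_contra hodd
    have hdvd : 2 ∣ Fintype.card (myIntRing F ⧸ myMaxIdeal F) := by omega
    haveI : Fact (Nat.Prime 2) := ⟨Nat.prime_two⟩
    obtain ⟨x, hx⟩ := exists_prime_addOrderOf_dvd_card 2 hdvd
    have hx0 : x ≠ 0 := by
      intro h
      rw [h, addOrderOf_zero] at hx
      omega
    have h2x : ((2 : ℕ) : myIntRing F ⧸ myMaxIdeal F) * x = 0 := by
      rw [← nsmul_eq_mul, ← hx]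
      exact addOrderOf_nsmul_eq_zero x
    have h2k : ((2 : ℕ) : myIntRing F ⧸ myMaxIdeal F) ≠ 0 := by
      have hcast : ((2 : ℕ) : myIntRing F ⧸ myMaxIdeal F) = mk ((2 : ℕ) : myIntRing F) := by
        push_cast; rfl
      rw [hcast]
      apply hmk_ne
      push_cast
      exact h2
    rcases mul_eq_zero.mp h2x with h | h
    · exact h2k h
    · exact hx0 h
  obtain ⟨a, b, hab⟩ := FiniteField.exists_root_sum_quadratic
    (f := Polynomial.X ^ 2 - Polynomial.C (mk wO))
    (g := Polynomial.C (-(mk uO)) * Polynomial.X ^ 2)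
    (Polynomial.degree_X_pow_sub_C (by norm_num) _)
    (Polynomial.degree_C_mul_X_pow 2 (neg_ne_zero.mpr (hmk_ne uO hu)))
    hcard
  simp only [Polynomial.eval_mul, Polynomial.eval_sub, Polynomial.eval_pow,
    Polynomial.eval_X, Polynomial.eval_C] at hab
  obtain ⟨α, rfl⟩ := Ideal.Quotient.mk_surjective a
  obtain ⟨β, rfl⟩ := Ideal.Quotient.mk_surjective b
  set z : myIntRing F := α ^ 2 - uO * β ^ 2 - wO with hz
  have hmkz : mk z = 0 := by
    rw [hz, map_sub, map_sub, map_mul, map_pow, map_pow]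
    linear_combination hab
  have hznorm : ‖(α : F) ^ 2 - u * (β : F) ^ 2 - w‖ < 1 := by
    have h' := (mem_myMaxIdeal z).mp (Ideal.Quotient.eq_zero_iff_mem.mp hmkz)
    rw [hz] at h'
    push_cast at h'
    exact h'
  set A : F := (α : F) with hA
  set B : F := (β : F) with hB
  have hA1 : ‖A‖ ≤ 1 := α.2
  have hB1 : ‖B‖ ≤ 1 := β.2
  rcases eq_or_lt_of_le hA1 with hA1' | hA1'
  · have hv : ‖A ^ 2 - (u * B ^ 2 + w)‖ < 1 := by
      have heq : A ^ 2 - (u * B ^ 2 + w) = A ^ 2 - u * B ^ 2 - w := by ring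
      rw [heq]; exact hznorm
    obtain ⟨x, hx⟩ := newton_sqrt h2 (u * B ^ 2 + w) A hA1' hv
    exact ⟨x, B, by rw [hx]; ring⟩
  · have hu0 : u ≠ 0 := by intro h; rw [h] at hu; simp at hu
    have hA2 : ‖A ^ 2‖ < 1 := by
      rw [norm_pow]
      exact pow_lt_one₀ (norm_nonneg _) hA1' (by norm_num)
    have huBw : ‖u * B ^ 2 + w‖ < 1 := by
      have heq : u * B ^ 2 + w = A ^ 2 - (A ^ 2 - u * B ^ 2 - w) := by ring
      rw [heq]
      exact lt_of_le_of_lt (my_norm_sub_le_max _ _) (max_lt hA2 hznorm)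
    have hBnorm : ‖B‖ = 1 := by
      rcases eq_or_lt_of_le hB1 with h | h
      · exact h
      · exfalso
        have hB2 : ‖u * B ^ 2‖ < 1 := by
          rw [norm_mul, hu, one_mul, norm_pow]
          exact pow_lt_one₀ (norm_nonneg _) h (by norm_num)
        have hwlt : ‖w‖ < 1 := by
          have heq : w = u * B ^ 2 + w - u * B ^ 2 := by ring
          rw [heq]
          exact lt_of_le_of_lt (my_norm_sub_le_max _ _) (max_lt huBw hB2)
        rw [hw] at hwlt
        exact lt_irrefl _ hwlt
    have hv : ‖B ^ 2 - (-(w / u))‖ < 1 := by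
      have heq : B ^ 2 - (-(w / u)) = (u * B ^ 2 + w) / u := by field_simp; ring
      rw [heq, norm_div, hu, div_one]
      exact huBw
    obtain ⟨x, hx⟩ := newton_sqrt h2 (-(w / u)) B hBnorm hv
    refine ⟨0, x, ?_⟩
    rw [hx]
    field_simp
    ring

set_option maxHeartbeats 1000000
set_option synthInstance.maxHeartbeats 400000

/-- Let `F` be a finite extension of `ℚ_p` (`p` odd) with its canonical absolute value,
`u` a non-square unit, `π` a uniformizer, and `E = F(√u)` the unramified quadratic extension
with Galois conjugation `σ`. Then there exists `g ∈ GL(2, E)` with `g · ᵗḡ = π · I₂`. -/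
theorem stmt8 (p : ℕ) [Fact (Nat.Prime p)] (hp : p ≠ 2)
    (F : Type*) [NormedField F] [Algebra ℚ_[p] F] [FiniteDimensional ℚ_[p] F]
    (hFnorm : ∀ q : ℚ_[p], ‖algebraMap ℚ_[p] F q‖ = ‖q‖)
    -- `u` is a non-square unit
    (u : F) (hu_unit : ‖u‖ = 1) (hu_nonsq : ¬ ∃ c : F, u = c ^ 2)
    -- `π` is a uniformizer
    (π : F) (hπ0 : π ≠ 0) (hπlt : ‖π‖ < 1)
    (hπmax : ∀ x : F, x ≠ 0 → ‖x‖ < 1 → ‖x‖ ≤ ‖π‖)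
    -- `E = F(√u)` with conjugation `σ`
    (E : Type*) [Field E] [Algebra F E]
    (s : E) (hs : s ^ 2 = algebraMap F E u)
    (hgen : ∀ x : E, ∃ a b : F, x = algebraMap F E a + algebraMap F E b * s)
    (σ : E ≃ₐ[F] E) (hσ : σ s = -s) :
    ∃ g : Matrix (Fin 2) (Fin 2) E, IsUnit g ∧
      g * (g.map fun x => σ x).transpose
        = algebraMap F E π • (1 : Matrix (Fin 2) (Fin 2) E) := by
  classical
  -- set up the analytic structure on `F`
  letI : NormedSpace ℚ_[p] F :=
    ⟨fun q x => le_of_eq (by rw [Algebra.smul_def, norm_mul, hFnorm])⟩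
  haveI : IsUltrametricDist F := by
    apply IsUltrametricDist.isUltrametricDist_of_forall_norm_natCast_le_one
    intro n
    have hcast : ((n : ℕ) : F) = algebraMap ℚ_[p] F ((n : ℕ) : ℚ_[p]) :=
      (map_natCast (algebraMap ℚ_[p] F) n).symm
    rw [hcast, hFnorm]
    exact_mod_cast Padic.norm_int_le_one (n : ℤ)
  haveI : ProperSpace F := FiniteDimensional.proper ℚ_[p] F
  -- `‖2‖ = 1` in `F`
  have h2 : ‖(2 : F)‖ = 1 := by
    have hcast : ((2 : F)) = algebraMap ℚ_[p] F ((2 : ℤ) : ℚ_[p]) := by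
      push_cast
      rw [map_ofNat]
    rw [hcast, hFnorm]
    have hle : ‖((2 : ℤ) : ℚ_[p])‖ ≤ 1 := Padic.norm_int_le_one _
    have hnlt : ¬ ‖((2 : ℤ) : ℚ_[p])‖ < 1 := by
      rw [Padic.norm_intCast_lt_one_iff]
      intro hdvd
      have : (p : ℤ) ∣ 2 := hdvd
      have hple : p ∣ 2 := by exact_mod_cast this
      have := (Nat.prime_dvd_prime_iff_eq (Fact.out) Nat.prime_two).mp hple
      exact hp this
    linarith [lt_or_eq_of_le hle]
  -- `π - 1` is a unit
  have hw : ‖π - 1‖ = 1 := by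
    have hle : ‖π - 1‖ ≤ 1 :=
      (my_norm_sub_le_max π 1).trans (by rw [norm_one]; exact max_le hπlt.le le_rfl)
    have hge : (1 : ℝ) ≤ ‖π - 1‖ := by
      by_contra hcon
      push_neg at hcon
      have h1 : ‖(1 : F)‖ ≤ max ‖π‖ ‖π - 1‖ := by
        have heq : (1 : F) = π - (π - 1) := by ring
        calc ‖(1 : F)‖ = ‖π - (π - 1)‖ := by rw [← heq]
          _ ≤ _ := my_norm_sub_le_max _ _
      rw [norm_one] at h1
      have hmax := max_lt hπlt hcon
      linarith
    linarith
  -- represent `π - 1` by the norm form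
  obtain ⟨a, b, hab⟩ := exists_hermitian_norm_rep h2 u (π - 1) hu_unit hw
  -- move to `E`
  set φ := algebraMap F E with hφ
  set y : E := φ a + φ b * s with hy
  have hσy : σ y = φ a - φ b * s := by
    rw [hy, map_add, map_mul, σ.commutes, σ.commutes, hσ]
    ring
  have hyy : y * σ y = φ π - 1 := by
    rw [hy, hσy]
    have : (φ a + φ b * s) * (φ a - φ b * s) = φ a ^ 2 - φ b ^ 2 * s ^ 2 := by ring
    rw [this, hs]
    rw [← map_pow, ← map_pow, ← map_mul, ← map_sub, ← map_one φ, ← map_sub]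
    congr 1
    linear_combination hab
  have hσσy : σ (σ y) = y := by
    rw [hσy, map_sub, map_mul, σ.commutes, σ.commutes, hσ, hy]
    ring
  have hPi0 : φ π ≠ 0 := by
    simp only [hφ, ne_eq, map_eq_zero]
    exact hπ0
  -- the matrix
  refine ⟨!![1, y; -(σ y), 1], ?_, ?_⟩
  · rw [Matrix.isUnit_iff_isUnit_det]
    have hdet : (!![1, y; -(σ y), 1] : Matrix (Fin 2) (Fin 2) E).det = φ π := by
      rw [Matrix.det_fin_two_of]
      have h' : (1 : E) * 1 - y * (-(σ y)) = 1 + y * σ y := by ring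
      rw [h', hyy]
      ring
    rw [hdet]
    exact isUnit_iff_ne_zero.mpr hPi0
  · have hmap : ((!![1, y; -(σ y), 1] : Matrix (Fin 2) (Fin 2) E).map fun x => σ x)
        = !![1, σ y; -y, 1] := by
      ext i j
      fin_cases i <;> fin_cases j <;> simp [Matrix.map_apply, hσσy]
    rw [hmap]
    have htrans : (!![(1:E), σ y; -y, 1]).transpose = !![1, -y; σ y, 1] := by
      ext i j
      fin_cases i <;> fin_cases j <;> simp
    rw [htrans, Matrix.mul_fin_two]
    have hsmul : (algebraMap F E π) • (1 : Matrix (Fin 2) (Fin 2) E) = !![φ π, 0; 0, φ π] := by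
      ext i j
      fin_cases i <;> fin_cases j <;> simp [hφ]
    rw [hsmul]
    ext i j
    fin_cases i <;> fin_cases j <;>
      simp <;>
      first
        | linear_combination hyy
        | linear_combination -hyy
        | linear_combination y * hσy - hσy * y
end

section
/- Let F be a p-adic field with residue characteristic ≠ 2, u a non-square unit, π a uniformizer, E = F(√u), J_π = [[0, π],[1, 0]], and S⁺ = {X ∈ M(2,E) : ᵗX = X and J_π X̄ = X ᵗJ_π} = {[[π x̄, μ],[μ, x]] : x ∈ E, μ ∈ F}. If M ∈ M(2, E) and ν ∈ E* satisfy M X ᵗM = ν X for all X ∈ S⁺, then there exists a ∈ E* such that ν = a² and M = a·I₂. -/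
/-- The matrix `J_c = [[0, c],[1, 0]]`. -/
def Jmat {E : Type*} [Ring E] (c : E) : Matrix (Fin 2) (Fin 2) E :=
  !![0, c; 1, 0]

/-- Let `F` be a `p`-adic field (`p` odd), `u` a non-square unit, `π` a uniformizer,
`E = F(√u)` with conjugation `σ`, and
`S⁺ = {X ∈ M(2,E) : ᵗX = X, J_π X̄ = X ᵗJ_π}`. If `M ∈ M(2,E)` and `ν ∈ E*` satisfy
`M X ᵗM = ν X` for all `X ∈ S⁺`, then `ν = a²` and `M = a·I₂` for some `a ∈ E*`. -/
theorem stmt10 (p : ℕ) [Fact (Nat.Prime p)] (hp : p ≠ 2)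
    (F : Type*) [NormedField F] [Algebra ℚ_[p] F] [FiniteDimensional ℚ_[p] F]
    (hFnorm : ∀ q : ℚ_[p], ‖algebraMap ℚ_[p] F q‖ = ‖q‖)
    (u : F) (hu_unit : ‖u‖ = 1) (hu_nonsq : ¬ ∃ c : F, u = c ^ 2)
    (π : F) (hπ0 : π ≠ 0) (hπlt : ‖π‖ < 1)
    (hπmax : ∀ x : F, x ≠ 0 → ‖x‖ < 1 → ‖x‖ ≤ ‖π‖)
    (E : Type*) [Field E] [Algebra F E]
    (s : E) (hs : s ^ 2 = algebraMap F E u)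
    (hgen : ∀ x : E, ∃ a b : F, x = algebraMap F E a + algebraMap F E b * s)
    (σ : E ≃ₐ[F] E) (hσ : σ s = -s)
    (M : Matrix (Fin 2) (Fin 2) E) (ν : E) (hν : ν ≠ 0)
    (hM : ∀ X : Matrix (Fin 2) (Fin 2) E,
      X.transpose = X →
      Jmat (algebraMap F E π) * (X.map fun x => σ x) = X * (Jmat (algebraMap F E π)).transpose →
      M * X * M.transpose = ν • X) :
    ∃ a : E, a ≠ 0 ∧ ν = a ^ 2 ∧ M = a • (1 : Matrix (Fin 2) (Fin 2) E) := by
  have hFE : Function.Injective (algebraMap F E) := (algebraMap F E).injective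
  haveI : CharZero F := charZero_of_injective_algebraMap (algebraMap ℚ_[p] F).injective
  haveI : CharZero E := charZero_of_injective_algebraMap hFE
  set P : E := algebraMap F E π with hP
  have hPne : P ≠ 0 := by rw [hP]; exact (map_ne_zero _).mpr hπ0
  have hsne : s ≠ 0 := by
    intro h
    have hu0 : u = 0 := by
      apply hFE; rw [← hs, h]; simp
    rw [hu0] at hu_unit; simp at hu_unit
  set a := M 0 0; set b := M 0 1; set c := M 1 0; set d := M 1 1
  -- X₂ = diag(π, 1)
  have h2 := hM !![P, 0; 0, 1]
    (by ext i j; fin_cases i <;> fin_cases j <;> simp [Matrix.transpose_apply])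
    (by ext i j; fin_cases i <;> fin_cases j <;>
        simp [Jmat, Matrix.mul_apply, Fin.sum_univ_succ, Matrix.transpose_apply,
          Matrix.vecHead, Matrix.vecTail, hP, AlgEquiv.commutes])
  -- X₃ = diag(-πs, s)
  have h3 := hM !![-P * s, 0; 0, s]
    (by ext i j; fin_cases i <;> fin_cases j <;> simp [Matrix.transpose_apply])
    (by ext i j; fin_cases i <;> fin_cases j <;>
        simp [Jmat, Matrix.mul_apply, Fin.sum_univ_succ, Matrix.transpose_apply,
          Matrix.vecHead, Matrix.vecTail, hP, AlgEquiv.commutes, hσ] <;> ring)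
  -- X₁ = [[0,1],[1,0]]
  have h1 := hM !![0, 1; 1, 0]
    (by ext i j; fin_cases i <;> fin_cases j <;> simp [Matrix.transpose_apply])
    (by ext i j; fin_cases i <;> fin_cases j <;>
        simp [Jmat, Matrix.mul_apply, Fin.sum_univ_succ, Matrix.transpose_apply,
          Matrix.vecHead, Matrix.vecTail, hP, AlgEquiv.commutes])
  have e00 : P * a * a + b * b = ν * P := by
    have := congrFun (congrFun h2 0) 0
    simpa [Matrix.mul_apply, Fin.sum_univ_succ, mul_comm, mul_assoc, mul_left_comm] using this
  have e11 : P * c * c + d * d = ν := by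
    have := congrFun (congrFun h2 1) 1
    simpa [Matrix.mul_apply, Fin.sum_univ_succ, mul_comm, mul_assoc, mul_left_comm] using this
  have f00 : -P * s * a * a + s * b * b = ν * (-P * s) := by
    have := congrFun (congrFun h3 0) 0
    simpa [Matrix.mul_apply, Fin.sum_univ_succ, mul_comm, mul_assoc, mul_left_comm] using this
  have f11 : -P * s * c * c + s * d * d = ν * s := by
    have := congrFun (congrFun h3 1) 1
    simpa [Matrix.mul_apply, Fin.sum_univ_succ, mul_comm, mul_assoc, mul_left_comm] using this
  have g01 : b * c + a * d = ν := by
    have := congrFun (congrFun h1 0) 1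
    simpa [Matrix.mul_apply, Fin.sum_univ_succ, mul_comm, mul_assoc, mul_left_comm] using this
  -- derive f00' : -P a² + b² = -ν P
  have f00' : -(P * a * a) + b * b = -(ν * P) := by
    have : s * (-(P * a * a) + b * b) = s * (-(ν * P)) := by linear_combination f00
    exact mul_left_cancel₀ hsne this
  have f11' : -(P * c * c) + d * d = ν := by
    have : s * (-(P * c * c) + d * d) = s * ν := by linear_combination f11
    exact mul_left_cancel₀ hsne this
  have hb2 : b * b = 0 := by
    have h2' : (2 : E) * (b * b) = 0 := by linear_combination e00 + f00'
    have := mul_eq_zero.mp h2'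
    rcases this with h | h
    · exact absurd h two_ne_zero
    · exact h
  have hb : b = 0 := mul_self_eq_zero.mp hb2
  have hc : c = 0 := by
    have h2' : (2 : E) * (P * (c * c)) = 0 := by linear_combination e11 - f11'
    rcases mul_eq_zero.mp h2' with h | h
    · exact absurd h two_ne_zero
    · rcases mul_eq_zero.mp h with h | h
      · exact absurd h hPne
      · exact mul_self_eq_zero.mp h
  have ha2 : a * a = ν := by
    have : P * (a * a) = P * ν := by linear_combination e00 - hb2
    exact mul_left_cancel₀ hPne this
  have hd2 : d * d = ν := by linear_combination e11 - P * c * hc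
  have hane : a ≠ 0 := by
    intro h; apply hν; rw [← ha2, h, mul_zero]
  have hda : d = a := by
    have had : a * d = ν := by linear_combination g01 - c * hb
    have : a * d = a * a := by rw [had, ha2]
    exact mul_left_cancel₀ hane this
  refine ⟨a, hane, by rw [sq, ha2], ?_⟩
  ext i j
  fin_cases i <;> fin_cases j <;> simp [Matrix.one_apply] <;>
    first | rfl | exact hb | exact hc | exact hda
end

section
/- Let g̃ be a finite-dimensional semisimple Lie algebra over a field of characteristic 0, with a short ℤ-grading g̃ = V⁻ ⊕ 𝔤 ⊕ V⁺ by ad H₀ (eigenvalues -2, 0, 2) and V⁺, V⁻ abelian. Then g̃' = V⁻ ⊕ [V⁻, V⁺] ⊕ V⁺ is an ideal of g̃, and the direct complement with respect to the Killing form is an ideal contained in 𝔤 acting trivially on V⁺ and V⁻. -/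
/-- The orthogonal complement of a subspace of a Lie algebra with respect to the Killing form. -/
def orthKilling (F : Type*) [Field F] (L : Type*) [LieRing L] [LieAlgebra F L]
    [Module.Finite F L] (S : Submodule F L) : Submodule F L where
  carrier := {x : L | ∀ y ∈ S, killingForm F L x y = 0}
  add_mem' := by
    intro a b ha hb y hy
    rw [map_add, LinearMap.add_apply, ha y hy, hb y hy, add_zero]
  zero_mem' := by
    intro y hy
    simp
  smul_mem' := by
    intro c a ha y hy
    rw [map_smul, LinearMap.smul_apply, ha y hy, smul_zero]

/-- Let `g̃ = V⁻ ⊕ g ⊕ V⁺` be a short ℤ-graded semisimple Lie algebra over a field of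
characteristic 0, with `V⁺, V⁻` abelian. Then `g̃' = V⁻ ⊕ [V⁻, V⁺] ⊕ V⁺` is an ideal of `g̃`,
and its orthogonal complement for the Killing form is a direct complement which is an ideal
contained in `g` acting trivially on `V⁺` and `V⁻`. -/
theorem stmt19 (F : Type*) [Field F] [CharZero F]
    (L : Type*) [LieRing L] [LieAlgebra F L] [Module.Finite F L]
    [LieAlgebra.IsSemisimple F L]
    (Vm g Vp : Submodule F L) (H₀ : L) (hH₀ : H₀ ∈ g)
    (heigp : ∀ x ∈ Vp, ⁅H₀, x⁆ = (2 : F) • x)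
    (heig0 : ∀ x ∈ g, ⁅H₀, x⁆ = 0)
    (heigm : ∀ x ∈ Vm, ⁅H₀, x⁆ = (-2 : F) • x)
    (hsum : Vm ⊔ g ⊔ Vp = ⊤)
    (hgp : ∀ x ∈ g, ∀ y ∈ Vp, ⁅x, y⁆ ∈ Vp)
    (hgm : ∀ x ∈ g, ∀ y ∈ Vm, ⁅x, y⁆ ∈ Vm)
    (hgg : ∀ x ∈ g, ∀ y ∈ g, ⁅x, y⁆ ∈ g)
    (hmp : ∀ x ∈ Vm, ∀ y ∈ Vp, ⁅x, y⁆ ∈ g)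
    (hpp : ∀ x ∈ Vp, ∀ y ∈ Vp, ⁅x, y⁆ = 0)
    (hmm : ∀ x ∈ Vm, ∀ y ∈ Vm, ⁅x, y⁆ = 0) :
    let S : Submodule F L :=
      Vm ⊔ Submodule.span F {z : L | ∃ x ∈ Vm, ∃ y ∈ Vp, z = ⁅x, y⁆} ⊔ Vp
    -- `S = V⁻ ⊕ [V⁻, V⁺] ⊕ V⁺` is an ideal of `g̃`
    (∀ x : L, ∀ y ∈ S, ⁅x, y⁆ ∈ S) ∧
    -- its Killing-orthogonal complement is an ideal …
    (∀ x : L, ∀ y ∈ orthKilling F L S, ⁅x, y⁆ ∈ orthKilling F L S) ∧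
    -- … contained in `g` …
    (orthKilling F L S ≤ g) ∧
    -- … acting trivially on `V⁺` and `V⁻` …
    (∀ x ∈ orthKilling F L S, (∀ v ∈ Vp, ⁅x, v⁆ = 0) ∧ (∀ v ∈ Vm, ⁅x, v⁆ = 0)) ∧
    -- … and it is a direct complement of `S`
    (S ⊓ orthKilling F L S = ⊥) ∧ (S ⊔ orthKilling F L S = ⊤) := by
  intro S
  set P : Submodule F L := Submodule.span F {z : L | ∃ x ∈ Vm, ∃ y ∈ Vp, z = ⁅x, y⁆} with hPdef
  have hSdef : S = Vm ⊔ P ⊔ Vp := rfl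
  set κ := killingForm F L with hκdef
  have hκinv : ∀ x y z : L, κ ⁅x, y⁆ z = κ x ⁅y, z⁆ := LieModule.traceForm_apply_lie_apply F L L
  have hκcomm : ∀ x y : L, κ x y = κ y x := LieModule.traceForm_comm F L L
  -- P ≤ g
  have hPg : P ≤ g := by
    rw [hPdef, Submodule.span_le]
    rintro z ⟨x, hx, y, hy, rfl⟩
    exact hmp x hx y hy
  have hVmS : Vm ≤ S := le_sup_of_le_left le_sup_left
  have hPS : P ≤ S := le_sup_of_le_left le_sup_right
  have hVpS : Vp ≤ S := le_sup_right
  -- generators of P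
  have hgenP : ∀ x ∈ Vm, ∀ y ∈ Vp, ⁅x, y⁆ ∈ P :=
    fun x hx y hy => Submodule.subset_span ⟨x, hx, y, hy, rfl⟩
  -- decomposition of elements of S
  have hSdec : ∀ x ∈ S, ∃ a ∈ Vm, ∃ c ∈ P, ∃ b ∈ Vp, x = a + c + b := by
    intro x hx
    rw [hSdef] at hx
    obtain ⟨u, hu, b, hb, rfl⟩ := Submodule.mem_sup.mp hx
    obtain ⟨a, ha, c, hc, rfl⟩ := Submodule.mem_sup.mp hu
    exact ⟨a, ha, c, hc, b, hb, rfl⟩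
  -- decomposition of elements of L
  have hLdec : ∀ x : L, ∃ a ∈ Vm, ∃ h ∈ g, ∃ b ∈ Vp, x = a + h + b := by
    intro x
    have hx : x ∈ Vm ⊔ g ⊔ Vp := by rw [hsum]; exact Submodule.mem_top
    obtain ⟨u, hu, b, hb, rfl⟩ := Submodule.mem_sup.mp hx
    obtain ⟨a, ha, c, hc, rfl⟩ := Submodule.mem_sup.mp hu
    exact ⟨a, ha, c, hc, b, hb, rfl⟩
  -- brackets with P
  have hmP : ∀ x ∈ Vm, ∀ c ∈ P, ⁅x, c⁆ ∈ Vm := by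
    intro x hx c hc
    induction hc using Submodule.span_induction with
    | mem z hz =>
      obtain ⟨u, hu, v, hv, rfl⟩ := hz
      rw [leibniz_lie, hmm x hx u hu, zero_lie, zero_add]
      rw [← lie_skew]
      exact Vm.neg_mem (hgm _ (hmp x hx v hv) u hu)
    | zero => rw [lie_zero]; exact Vm.zero_mem
    | add y z _ _ hy hz => rw [lie_add]; exact Vm.add_mem hy hz
    | smul t y _ hy => rw [lie_smul]; exact Vm.smul_mem t hy
  have hpP : ∀ x ∈ Vp, ∀ c ∈ P, ⁅x, c⁆ ∈ Vp := by
    intro x hx c hc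
    induction hc using Submodule.span_induction with
    | mem z hz =>
      obtain ⟨u, hu, v, hv, rfl⟩ := hz
      have h1 : ⁅x, u⁆ ∈ g := by
        rw [← lie_skew]
        exact g.neg_mem (hmp u hu x hx)
      rw [leibniz_lie, hpp x hx v hv, lie_zero, add_zero]
      exact hgp _ h1 v hv
    | zero => rw [lie_zero]; exact Vp.zero_mem
    | add y z _ _ hy hz => rw [lie_add]; exact Vp.add_mem hy hz
    | smul t y _ hy => rw [lie_smul]; exact Vp.smul_mem t hy
  have hgP : ∀ x ∈ g, ∀ c ∈ P, ⁅x, c⁆ ∈ P := by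
    intro x hx c hc
    induction hc using Submodule.span_induction with
    | mem z hz =>
      obtain ⟨u, hu, v, hv, rfl⟩ := hz
      rw [leibniz_lie]
      exact P.add_mem (hgenP _ (hgm x hx u hu) v hv) (hgenP u hu _ (hgp x hx v hv))
    | zero => rw [lie_zero]; exact P.zero_mem
    | add y z _ _ hy hz => rw [lie_add]; exact P.add_mem hy hz
    | smul t y _ hy => rw [lie_smul]; exact P.smul_mem t hy
  -- S is an ideal
  have hSideal : ∀ x : L, ∀ y ∈ S, ⁅x, y⁆ ∈ S := by
    intro x y hy
    obtain ⟨a, ha, c, hc, b, hb, rfl⟩ := hSdec y hy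
    obtain ⟨xa, hxa, xh, hxh, xb, hxb, rfl⟩ := hLdec x
    have key : ∀ w : L, (w ∈ Vm ∨ w ∈ g ∨ w ∈ Vp) → ⁅w, a + c + b⁆ ∈ S := by
      rintro w hw
      rw [lie_add, lie_add]
      rcases hw with hw | hw | hw
      · refine S.add_mem (S.add_mem ?_ ?_) ?_
        · rw [hmm w hw a ha]; exact S.zero_mem
        · exact hVmS (hmP w hw c hc)
        · exact hPS (hgenP w hw b hb)
      · refine S.add_mem (S.add_mem ?_ ?_) ?_
        · exact hVmS (hgm w hw a ha)
        · exact hPS (hgP w hw c hc)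
        · exact hVpS (hgp w hw b hb)
      · refine S.add_mem (S.add_mem ?_ ?_) ?_
        · rw [← lie_skew]
          exact hPS (P.neg_mem (hgenP a ha w hw))
        · exact hVpS (hpP w hw c hc)
        · rw [hpp w hw b hb]; exact S.zero_mem
    rw [add_lie, add_lie]
    exact S.add_mem (S.add_mem (key xa (Or.inl hxa)) (key xh (Or.inr (Or.inl hxh))))
      (key xb (Or.inr (Or.inr hxb)))
  -- the orthogonal complement
  set T := orthKilling F L S with hTdef
  have hTmem : ∀ x : L, x ∈ T ↔ ∀ y ∈ S, κ x y = 0 := fun x => Iff.rfl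
  have hTideal : ∀ x : L, ∀ y ∈ T, ⁅x, y⁆ ∈ T := by
    intro x y hy
    rw [hTmem]
    intro s hs
    have h1 : ⁅x, y⁆ = -⁅y, x⁆ := (lie_skew x y).symm
    rw [h1, map_neg, LinearMap.neg_apply, hκinv y x s, (hTmem y).mp hy _ (hSideal x s hs), neg_zero]
  -- S as a Lie ideal
  let SI : LieIdeal F L := { toSubmodule := S, lie_mem := fun {x m} hm => hSideal x m hm }
  have hSImem : ∀ x : L, x ∈ SI ↔ x ∈ S := fun _ => Iff.rfl
  have hSIcoe : (LieSubmodule.toSubmodule SI : Submodule F L) = S := rfl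
  -- membership in an ideal from both slots
  have hlie_left : ∀ (I : LieIdeal F L), ∀ x : L, ∀ m ∈ I, ⁅m, x⁆ ∈ I := by
    intro I x m hm
    rw [← lie_skew]
    exact neg_mem (I.lie_mem hm)
  -- the Boolean complement of S
  let C : LieIdeal F L := SIᶜ
  have hSC_bot : SI ⊓ C = ⊥ := inf_compl_eq_bot
  have hSC_top : SI ⊔ C = ⊤ := sup_compl_eq_top
  have hSC0 : ∀ z : L, z ∈ SI → z ∈ C → z = 0 := by
    intro z h1 h2
    have : z ∈ SI ⊓ C := (LieSubmodule.mem_inf _ _ z).mpr ⟨h1, h2⟩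
    rw [hSC_bot, LieSubmodule.mem_bot] at this
    exact this
  -- C is orthogonal to S
  have hCT : ∀ c ∈ C, c ∈ T := by
    intro c hc
    rw [hTmem]
    intro s hs
    have hzero : (LieAlgebra.ad F L c ∘ₗ LieAlgebra.ad F L s) = 0 := by
      ext z
      have h1 : ⁅s, z⁆ ∈ S := hlie_left SI z s hs
      have h2 : ⁅c, ⁅s, z⁆⁆ ∈ SI := SI.lie_mem ((hSImem _).mpr h1)
      have h3 : ⁅c, ⁅s, z⁆⁆ ∈ C := hlie_left C _ c hc
      simp only [LinearMap.comp_apply, LieAlgebra.ad_apply, LinearMap.zero_apply]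
      exact hSC0 _ h2 h3
    rw [hκdef, killingForm_apply_apply, hzero, map_zero]
  -- S ⊔ T = ⊤
  have hST_top : S ⊔ T = ⊤ := by
    rw [eq_top_iff]
    have h1 : (LieSubmodule.toSubmodule (SI ⊔ C) : Submodule F L) = ⊤ := by
      rw [hSC_top]; exact LieSubmodule.top_toSubmodule
    rw [LieSubmodule.sup_toSubmodule, hSIcoe] at h1
    rw [← h1]
    exact sup_le_sup le_rfl (fun c hc => hCT c hc)
  -- elements of S ⊓ T are Killing-orthogonal to everything
  have hSTK : ∀ x : L, x ∈ S → x ∈ T → ∀ y : L, κ x y = 0 := by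
    intro x hxS hxT y
    have hy : y ∈ S ⊔ T := by rw [hST_top]; exact Submodule.mem_top
    obtain ⟨s, hs, t, ht, rfl⟩ := Submodule.mem_sup.mp hy
    have h1 : κ x s = 0 := (hTmem x).mp hxT s hs
    have h2 : κ x t = 0 := by rw [hκcomm]; exact (hTmem t).mp ht x hxS
    rw [map_add, h1, h2, add_zero]
  -- the kernel of the Killing form, as an ideal
  let KI : LieIdeal F L := LieIdeal.killingCompl F L ⊤
  have hKImem : ∀ x : L, x ∈ KI ↔ ∀ y : L, κ y x = 0 := by
    intro x
    rw [LieIdeal.mem_killingCompl]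
    exact ⟨fun h y => h y (LieSubmodule.mem_top _), fun h y _ => h y⟩
  let EI : LieIdeal F L := KI ⊓ SI
  have hEImem : ∀ x : L, x ∈ EI ↔ (x ∈ KI ∧ x ∈ S) := fun x => LieSubmodule.mem_inf KI SI x
  -- graded components of elements of ideals contained (elementwise) in S
  have hcomp : ∀ (A : LieIdeal F L), ∀ x, x ∈ A → x ∈ S →
      ∃ a ∈ Vm, ∃ c ∈ P, ∃ b ∈ Vp, x = a + c + b ∧ a ∈ A ∧ b ∈ A ∧ c ∈ A ∧
        ⁅H₀, x⁆ = (-2 : F) • a + (2 : F) • b := by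
    intro A x hxA hxS
    obtain ⟨a, ha, c, hc, b, hb, hxeq⟩ := hSdec x hxS
    have h1 : ⁅H₀, x⁆ = (-2 : F) • a + (2 : F) • b := by
      rw [hxeq, lie_add, lie_add, heigm a ha, heig0 c (hPg hc), heigp b hb, add_zero]
    have h2 : ⁅H₀, ⁅H₀, x⁆⁆ = (4 : F) • a + (4 : F) • b := by
      rw [h1, lie_add, lie_smul, lie_smul, heigm a ha, heigp b hb, smul_smul, smul_smul]
      norm_num
    have haeq : a = (8 : F)⁻¹ • (⁅H₀, ⁅H₀, x⁆⁆ - (2 : F) • ⁅H₀, x⁆) := by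
      rw [h2, h1]; match_scalars <;> field_simp <;> norm_num
    have hbeq : b = (8 : F)⁻¹ • (⁅H₀, ⁅H₀, x⁆⁆ + (2 : F) • ⁅H₀, x⁆) := by
      rw [h2, h1]; match_scalars <;> field_simp <;> norm_num
    have hH1 : ⁅H₀, x⁆ ∈ A := A.lie_mem hxA
    have hH2 : ⁅H₀, ⁅H₀, x⁆⁆ ∈ A := A.lie_mem hH1
    have haA : a ∈ A := by
      rw [haeq]; exact SMulMemClass.smul_mem _ (sub_mem hH2 (SMulMemClass.smul_mem _ hH1))
    have hbA : b ∈ A := by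
      rw [hbeq]; exact SMulMemClass.smul_mem _ (add_mem hH2 (SMulMemClass.smul_mem _ hH1))
    have hcA : c ∈ A := by
      have : c = x - a - b := by rw [hxeq]; abel
      rw [this]; exact sub_mem (sub_mem hxA haA) hbA
    exact ⟨a, ha, c, hc, b, hb, hxeq, haA, hbA, hcA, h1⟩
  have hm2 : (-2 : F) ≠ 0 := by norm_num
  have hp2 : (2 : F) ≠ 0 := by norm_num
  have h4 : (4 : F) ≠ 0 := by norm_num
  -- the key fact: EI = ⊥
  have hEbot : ∀ x : L, x ∈ EI → x = 0 := by
    by_cases hcase : ∀ x, x ∈ EI → x ∈ g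
    · -- EI is contained in g, hence abelian, hence trivial
      have hEVm : ∀ w : L, w ∈ EI → w ∈ Vm → w = 0 := by
        intro w hw hwVm
        have h0 : (-2 : F) • w = 0 := by
          rw [← heigm w hwVm]; exact heig0 w (hcase w hw)
        rcases smul_eq_zero.mp h0 with h | h
        · exact absurd h hm2
        · exact h
      have hEVp : ∀ w : L, w ∈ EI → w ∈ Vp → w = 0 := by
        intro w hw hwVp
        have h0 : (2 : F) • w = 0 := by
          rw [← heigp w hwVp]; exact heig0 w (hcase w hw)
        rcases smul_eq_zero.mp h0 with h | h
        · exact absurd h hp2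
        · exact h
      have hEP : ∀ x : L, x ∈ EI → x ∈ P := by
        intro x hx
        obtain ⟨a, ha, c, hc, b, hb, hxeq, haA, hbA, hcA, -⟩ :=
          hcomp EI x hx ((hEImem x).mp hx).2
        rw [hxeq, hEVm a haA ha, hEVp b hbA hb, zero_add, add_zero]
        exact hc
      have habel : ∀ x, x ∈ EI → ∀ y, y ∈ EI → ⁅x, y⁆ = 0 := by
        intro x hx y hy
        have hxg : x ∈ g := hcase x hx
        have hyP : y ∈ P := hEP y hy
        clear hy
        induction hyP using Submodule.span_induction with
        | mem z hz =>
          obtain ⟨u, hu, v, hv, rfl⟩ := hz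
          have h1 : ⁅x, u⁆ = 0 := hEVm _ (hlie_left EI u x hx) (hgm x hxg u hu)
          have h2 : ⁅x, v⁆ = 0 := hEVp _ (hlie_left EI v x hx) (hgp x hxg v hv)
          rw [leibniz_lie, h1, h2, zero_lie, lie_zero, add_zero]
        | zero => rw [lie_zero]
        | add y' z' _ _ hy' hz' => rw [lie_add, hy', hz', add_zero]
        | smul t y' _ hy' => rw [lie_smul, hy', smul_zero]
      have habel' : IsLieAbelian EI := by
        constructor
        rintro ⟨y, hy⟩ ⟨z, hz⟩
        ext
        simp only [LieIdeal.coe_bracket_of_module, LieSubmodule.coe_bracket,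
          ZeroMemClass.coe_zero]
        exact habel y hy z hz
      have hEI : EI = ⊥ :=
        (LieAlgebra.hasTrivialRadical_iff_no_abelian_ideals F L).mp inferInstance EI habel'
      intro x hx
      rw [hEI, LieSubmodule.mem_bot] at hx
      exact hx
    · -- otherwise, trace computation gives a contradiction
      exfalso
      push_neg at hcase
      obtain ⟨x₀, hx₀E, hx₀g⟩ := hcase
      obtain ⟨a, ha, c, hc, b, hb, hxeq, haA, hbA, hcA, -⟩ :=
        hcomp EI x₀ hx₀E ((hEImem x₀).mp hx₀E).2
      have hab : a ≠ 0 ∨ b ≠ 0 := by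
        by_contra h
        push_neg at h
        apply hx₀g
        rw [hxeq, h.1, h.2, zero_add, add_zero]
        exact hPg hc
      set W : Submodule F L :=
        (Vm ⊓ LieSubmodule.toSubmodule EI) ⊔ (Vp ⊓ LieSubmodule.toSubmodule EI) with hWdef
      have hWne : W ≠ ⊥ := by
        intro hW
        rcases hab with h | h
        · apply h
          have haW : a ∈ W := Submodule.mem_sup_left (Submodule.mem_inf.mpr ⟨ha, haA⟩)
          rw [hW, Submodule.mem_bot] at haW
          exact haW
        · apply h
          have hbW : b ∈ W := Submodule.mem_sup_right (Submodule.mem_inf.mpr ⟨hb, hbA⟩)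
          rw [hW, Submodule.mem_bot] at hbW
          exact hbW
      -- complement of EI and the component of H₀ in EI
      let NI : LieIdeal F L := EIᶜ
      have hEN_bot : EI ⊓ NI = ⊥ := inf_compl_eq_bot
      have hEN0 : ∀ z : L, z ∈ EI → z ∈ NI → z = 0 := by
        intro z h1 h2
        have : z ∈ EI ⊓ NI := (LieSubmodule.mem_inf _ _ z).mpr ⟨h1, h2⟩
        rw [hEN_bot, LieSubmodule.mem_bot] at this
        exact this
      have hENcomm : ∀ n, n ∈ NI → ∀ e, e ∈ EI → ⁅n, e⁆ = 0 := by
        intro n hn e he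
        exact hEN0 _ (EI.lie_mem he) (hlie_left NI e n hn)
      have hHtop : H₀ ∈ EI ⊔ NI := by
        rw [sup_compl_eq_top]
        exact LieSubmodule.mem_top H₀
      obtain ⟨e₀, he₀, n₀, hn₀, hH0eq⟩ := (LieSubmodule.mem_sup _ _ H₀).mp hHtop
      have hade : ∀ x, x ∈ EI → ⁅e₀, x⁆ = ⁅H₀, x⁆ := by
        intro x hx
        have h0 : ⁅n₀, x⁆ = 0 := hENcomm n₀ hn₀ x hx
        rw [← hH0eq, add_lie, h0, add_zero]
      have hadeEI : ∀ z : L, ⁅e₀, z⁆ ∈ EI := fun z => hlie_left EI z e₀ he₀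
      set f : L →ₗ[F] L := LieAlgebra.ad F L e₀ with hfdef
      have hfapp : ∀ z : L, f z = ⁅e₀, z⁆ := fun z => rfl
      set π : L →ₗ[F] L := (4 : F)⁻¹ • (f ∘ₗ f) with hπdef
      have hπW : ∀ z : L, π z ∈ W := by
        intro z
        have h1 : f z ∈ EI := hadeEI z
        obtain ⟨a', ha', c', hc', b', hb', heq', haA', hbA', hcA', hbr⟩ :=
          hcomp EI (f z) h1 ((hEImem _).mp h1).2
        have h2 : π z = (4 : F)⁻¹ • ((-2 : F) • a' + (2 : F) • b') := by
          rw [hπdef]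
          simp only [LinearMap.smul_apply, LinearMap.comp_apply]
          rw [hfapp, hade _ h1, hbr]
        rw [h2]
        refine W.smul_mem _ (W.add_mem (W.smul_mem _ ?_) (W.smul_mem _ ?_))
        · exact Submodule.mem_sup_left (Submodule.mem_inf.mpr ⟨ha', haA'⟩)
        · exact Submodule.mem_sup_right (Submodule.mem_inf.mpr ⟨hb', hbA'⟩)
      have hπid : ∀ w ∈ W, π w = w := by
        intro w hw
        rw [hWdef] at hw
        obtain ⟨wm, hwm, wp, hwp, rfl⟩ := Submodule.mem_sup.mp hw
        obtain ⟨hwmV, hwmE⟩ := Submodule.mem_inf.mp hwm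
        obtain ⟨hwpV, hwpE⟩ := Submodule.mem_inf.mp hwp
        have h1 : f wm = (-2 : F) • wm := by rw [hfapp, hade _ hwmE, heigm _ hwmV]
        have h2 : f wp = (2 : F) • wp := by rw [hfapp, hade _ hwpE, heigp _ hwpV]
        have h3 : f (f wm) = (4 : F) • wm := by
          rw [h1, map_smul, h1, smul_smul]; norm_num
        have h4' : f (f wp) = (4 : F) • wp := by
          rw [h2, map_smul, h2, smul_smul]; norm_num
        have h5 : (f ∘ₗ f) (wm + wp) = (4 : F) • (wm + wp) := by
          simp only [LinearMap.comp_apply, map_add]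
          rw [h3, h4', smul_add]
        rw [hπdef, LinearMap.smul_apply, h5, inv_smul_smul₀ h4]
      have hproj : LinearMap.IsProj W π := ⟨hπW, hπid⟩
      have htr : LinearMap.trace F L π = (Module.finrank F W : F) := hproj.trace
      have hffπ : f ∘ₗ f = (4 : F) • π := by
        rw [hπdef, smul_smul, mul_inv_cancel₀ h4, one_smul]
      have hκe₀ : κ e₀ e₀ = 0 := by
        have hKIe : e₀ ∈ KI := ((hEImem e₀).mp he₀).1
        exact (hKImem e₀).mp hKIe e₀
      have hκtr : κ e₀ e₀ = (4 : F) * (Module.finrank F W : F) := by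
        rw [hκdef, killingForm_apply_apply, ← hfdef, hffπ, map_smul, htr, smul_eq_mul]
      rw [hκe₀] at hκtr
      have hfr : Module.finrank F W = 0 := by
        rcases mul_eq_zero.mp hκtr.symm with h | h
        · exact absurd h h4
        · exact Nat.cast_eq_zero.mp h
      exact hWne (Submodule.finrank_eq_zero.mp hfr)
  -- S ⊓ T = ⊥
  have hST_bot : S ⊓ T = ⊥ := by
    rw [eq_bot_iff]
    intro x hx
    obtain ⟨hxS, hxT⟩ := Submodule.mem_inf.mp hx
    have hxK : x ∈ KI := (hKImem x).mpr fun y => by rw [← hκcomm]; exact hSTK x hxS hxT y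
    rw [Submodule.mem_bot]
    exact hEbot x ((hEImem x).mpr ⟨hxK, hxS⟩)
  have hST0 : ∀ x : L, x ∈ S → x ∈ T → x = 0 := by
    intro x h1 h2
    have : x ∈ S ⊓ T := Submodule.mem_inf.mpr ⟨h1, h2⟩
    rw [hST_bot, Submodule.mem_bot] at this
    exact this
  -- T ≤ g
  have hTg : ∀ t : L, t ∈ T → t ∈ g := by
    intro t ht
    obtain ⟨a, ha, h, hg', b, hb, hteq⟩ := hLdec t
    have h1 : ⁅H₀, t⁆ = (-2 : F) • a + (2 : F) • b := by
      rw [hteq, lie_add, lie_add, heigm a ha, heig0 h hg', heigp b hb, add_zero]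
    have h2 : ⁅H₀, ⁅H₀, t⁆⁆ = (4 : F) • a + (4 : F) • b := by
      rw [h1, lie_add, lie_smul, lie_smul, heigm a ha, heigp b hb, smul_smul, smul_smul]
      norm_num
    have haeq : a = (8 : F)⁻¹ • (⁅H₀, ⁅H₀, t⁆⁆ - (2 : F) • ⁅H₀, t⁆) := by
      rw [h2, h1]; match_scalars <;> field_simp <;> norm_num
    have hbeq : b = (8 : F)⁻¹ • (⁅H₀, ⁅H₀, t⁆⁆ + (2 : F) • ⁅H₀, t⁆) := by
      rw [h2, h1]; match_scalars <;> field_simp <;> norm_num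
    have hH1 : ⁅H₀, t⁆ ∈ T := hTideal H₀ t ht
    have hH2 : ⁅H₀, ⁅H₀, t⁆⁆ ∈ T := hTideal H₀ _ hH1
    have haT : a ∈ T := by
      rw [haeq]; exact T.smul_mem _ (T.sub_mem hH2 (T.smul_mem _ hH1))
    have hbT : b ∈ T := by
      rw [hbeq]; exact T.smul_mem _ (T.add_mem hH2 (T.smul_mem _ hH1))
    have ha0 : a = 0 := hST0 a (hVmS ha) haT
    have hb0 : b = 0 := hST0 b (hVpS hb) hbT
    rw [hteq, ha0, hb0, zero_add, add_zero]
    exact hg'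
  -- trivial action on Vp and Vm
  have hact : ∀ x, x ∈ T → (∀ v ∈ Vp, ⁅x, v⁆ = 0) ∧ (∀ v ∈ Vm, ⁅x, v⁆ = 0) := by
    intro x hx
    constructor
    · intro v hv
      refine hST0 _ (hVpS (hgp x (hTg x hx) v hv)) ?_
      rw [← lie_skew]
      exact T.neg_mem (hTideal v x hx)
    · intro v hv
      refine hST0 _ (hVmS (hgm x (hTg x hx) v hv)) ?_
      rw [← lie_skew]
      exact T.neg_mem (hTideal v x hx)
  exact ⟨hSideal, hTideal, hTg, hact, hST_bot, hST_top⟩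
end
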